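/- arXiv:2502.10351 — 4 statements merged into one kernel-verified Lean document; each statement's English description precedes it below -/
import Mathlib

section
/- The energy density W : M²_sym × ℝ → ℝ₊, W(ε,v) := (v²+η)(μ|ε_d|² + κ|ε_v⁺|²) + κ|ε_v⁻|², is of class C^{1,1}_loc, and there exist constants c, C > 0 such that for every v ∈ [0,1] and all symmetric 2×2 matrices ε₁, ε₂: (i) (∂_ε W(ε₁,v) − ∂_ε W(ε₂,v)) : (ε₁ − ε₂) ≥ c|ε₁ − ε₂|², and (ii) |∂_ε W(ε₁,v) − ∂_ε W(ε₂,v)| ≤ C|ε₁ − ε₂|. In particular, since ∂_ε W(0,v) = 0, it holds |∂_ε W(ε,v)| ≤ C|ε| for every symmetric 2×2 matrix ε. -/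
open Filter Topology Metric
open scoped ContDiff

noncomputable section

/-- Real `2 × 2` matrices (as functions); symmetric matrices are singled out by `IsSym`. -/
abbrev Mat : Type := Fin 2 → Fin 2 → ℝ

/-- Trace of a `2 × 2` matrix. -/
def mtrace (M : Mat) : ℝ := M 0 0 + M 1 1

/-- The identity matrix. -/
def idm : Mat := fun i j => if i = j then (1 : ℝ) else 0

/-- Deviatoric part `ε_d = ε - ½ tr(ε) I`. -/
def dev (M : Mat) : Mat := fun i j => M i j - (mtrace M / 2) * idm i j

/-- Tensile volumetric part `ε_v⁺ = ½ tr⁺(ε) I`. -/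
def volP (M : Mat) : Mat := fun i j => (max (mtrace M) 0 / 2) * idm i j

/-- Compressive volumetric part `ε_v⁻ = ½ tr⁻(ε) I`. -/
def volM (M : Mat) : Mat := fun i j => (max (-(mtrace M)) 0 / 2) * idm i j

/-- Squared Frobenius norm. -/
def frobSq (M : Mat) : ℝ := ∑ i, ∑ j, (M i j) ^ 2

/-- Frobenius norm `|ε|`. -/
def frobNorm (M : Mat) : ℝ := Real.sqrt (frobSq M)

/-- Frobenius inner product `M : N`. -/
def matInner (M N : Mat) : ℝ := ∑ i, ∑ j, M i j * N i j

/-- `M` is symmetric. -/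
def IsSym (M : Mat) : Prop := ∀ i j, M i j = M j i

/-- The energy density `W(ε,v) = (v² + η)(μ|ε_d|² + κ|ε_v⁺|²) + κ|ε_v⁻|²`. -/
def Wdens (μ κ η : ℝ) (M : Mat) (v : ℝ) : ℝ :=
  (v ^ 2 + η) * (μ * frobSq (dev M) + κ * frobSq (volP M)) + κ * frobSq (volM M)

/-- The derivative `∂_ε W(ε,v) = 2(v² + η)(μ ε_d + κ ε_v⁺) - 2κ ε_v⁻`. -/
def DWdens (μ κ η : ℝ) (M : Mat) (v : ℝ) : Mat := fun i j =>
  2 * (v ^ 2 + η) * (μ * dev M i j + κ * volP M i j) - 2 * κ * volM M i j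

def qq (s : ℝ) : ℝ := max s 0 ^ 2

lemma qq_hasDerivAt (s : ℝ) : HasDerivAt qq (2 * max s 0) s := by
  rcases lt_trichotomy s 0 with h | rfl | h
  · have : HasDerivAt (fun _ : ℝ => (0:ℝ)) 0 s := hasDerivAt_const s 0
    have heq : qq =ᶠ[𝓝 s] fun _ => (0:ℝ) := by
      filter_upwards [Iio_mem_nhds h] with x hx
      simp [qq, max_eq_right (le_of_lt (Set.mem_Iio.mp hx))]
    have := this.congr_of_eventuallyEq heq
    simpa [max_eq_right h.le] using this
  · rw [hasDerivAt_iff_tendsto_slope]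
    have hb : ∀ h : ℝ, |slope qq 0 h| ≤ |h| := by
      intro h
      rcases eq_or_ne h 0 with rfl | hh
      · simp [slope, qq]
      · have : slope qq 0 h = qq h / h := by
          rw [slope_def_field]; simp [qq]
        rw [this, abs_div]
        rw [div_le_iff₀ (abs_pos.2 hh)]
        have h1 : |qq h| ≤ h^2 := by
          have : max h 0 ^ 2 ≤ h ^ 2 := by
            rcases le_total h 0 with h' | h'
            · simp [max_eq_right h', sq_nonneg]
            · simp [max_eq_left h']
          simpa [qq, abs_of_nonneg (sq_nonneg (max h 0))] using this
        calc |qq h| ≤ h^2 := h1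
          _ = |h| * |h| := by rw [sq]; exact (abs_mul_abs_self h).symm
      
    have habs : Tendsto (fun h : ℝ => |h|) (𝓝[≠] (0:ℝ)) (𝓝 0) := by
      have h1 : Tendsto (fun h : ℝ => |h|) (𝓝 (0:ℝ)) (𝓝 |0|) :=
        continuous_abs.tendsto (0:ℝ)
      simpa using h1.mono_left (nhdsWithin_le_nhds (s := {(0:ℝ)}ᶜ))
    have := squeeze_zero_norm (f := slope qq 0)
      (fun h => by simpa [Real.norm_eq_abs] using hb h) habs
    simpa using this
  · have : HasDerivAt (fun x : ℝ => x ^ 2) (2 * s) s := by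
      simpa using hasDerivAt_pow 2 s
    have heq : qq =ᶠ[𝓝 s] fun x => x ^ 2 := by
      filter_upwards [Ioi_mem_nhds h] with x hx
      simp [qq, max_eq_left (le_of_lt (Set.mem_Ioi.mp hx))]
    have := this.congr_of_eventuallyEq heq
    simpa [max_eq_left h.le] using this

lemma qq_contDiff : ContDiff ℝ 1 qq := by
  rw [contDiff_one_iff_deriv]
  constructor
  · exact fun s => (qq_hasDerivAt s).differentiableAt
  · have : deriv qq = fun s => 2 * max s 0 := funext fun s => (qq_hasDerivAt s).deriv
    rw [this]
    exact continuous_const.mul (continuous_id.max continuous_const)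

namespace StmtAux

def LLoc {F : Type*} [NormedAddCommGroup F] (f : Mat × ℝ → F) : Prop :=
  ∀ R : ℝ, 0 < R → ∃ K : ℝ, 0 ≤ K ∧ ∀ p ∈ closedBall (0 : Mat × ℝ) R,
    ∀ p' ∈ closedBall (0 : Mat × ℝ) R, ‖f p - f p'‖ ≤ K * ‖p - p'‖

variable {F : Type*} [NormedAddCommGroup F] [NormedSpace ℝ F]

lemma LLoc.bound {f : Mat × ℝ → F} (hf : LLoc f) {R : ℝ} (hR : 0 < R) :
    ∃ B : ℝ, 0 ≤ B ∧ ∀ p ∈ closedBall (0 : Mat × ℝ) R, ‖f p‖ ≤ B := by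
  obtain ⟨K, hK0, hK⟩ := hf R hR
  refine ⟨‖f 0‖ + K * R, by positivity, fun p hp => ?_⟩
  have h0 : (0 : Mat × ℝ) ∈ closedBall (0 : Mat × ℝ) R := mem_closedBall_self hR.le
  have := hK p hp 0 h0
  have hpn : ‖p - 0‖ ≤ R := by
    simpa [dist_eq_norm] using mem_closedBall.mp hp
  calc ‖f p‖ = ‖(f p - f 0) + f 0‖ := by rw [sub_add_cancel]
    _ ≤ ‖f p - f 0‖ + ‖f 0‖ := norm_add_le _ _
    _ ≤ K * R + ‖f 0‖ := by
        refine add_le_add (this.trans ?_) (le_refl _)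
        simpa using mul_le_mul_of_nonneg_left hpn hK0
    _ = ‖f 0‖ + K * R := by ring

lemma LLoc.add {f g : Mat × ℝ → F} (hf : LLoc f) (hg : LLoc g) :
    LLoc (fun p => f p + g p) := by
  intro R hR
  obtain ⟨K1, hK10, hK1⟩ := hf R hR
  obtain ⟨K2, hK20, hK2⟩ := hg R hR
  refine ⟨K1 + K2, by positivity, fun p hp p' hp' => ?_⟩
  calc ‖f p + g p - (f p' + g p')‖ = ‖(f p - f p') + (g p - g p')‖ := by rw [add_sub_add_comm]
    _ ≤ ‖f p - f p'‖ + ‖g p - g p'‖ := norm_add_le _ _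
    _ ≤ K1 * ‖p - p'‖ + K2 * ‖p - p'‖ := add_le_add (hK1 p hp p' hp') (hK2 p hp p' hp')
    _ = (K1 + K2) * ‖p - p'‖ := by ring

lemma LLoc.smul {f : Mat × ℝ → ℝ} {g : Mat × ℝ → F} (hf : LLoc f) (hg : LLoc g) :
    LLoc (fun p => f p • g p) := by
  intro R hR
  obtain ⟨K1, hK10, hK1⟩ := hf R hR
  obtain ⟨K2, hK20, hK2⟩ := hg R hR
  obtain ⟨B1, hB10, hB1⟩ := hf.bound hR
  obtain ⟨B2, hB20, hB2⟩ := hg.bound hR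
  refine ⟨B1 * K2 + K1 * B2, by positivity, fun p hp p' hp' => ?_⟩
  have key : f p • g p - f p' • g p' = f p • (g p - g p') + (f p - f p') • g p' := by
    rw [smul_sub, sub_smul]; abel
  calc ‖f p • g p - f p' • g p'‖ = ‖f p • (g p - g p') + (f p - f p') • g p'‖ := by rw [key]
    _ ≤ ‖f p • (g p - g p')‖ + ‖(f p - f p') • g p'‖ := norm_add_le _ _
    _ = ‖f p‖ * ‖g p - g p'‖ + ‖f p - f p'‖ * ‖g p'‖ := by
        rw [norm_smul, norm_smul, Real.norm_eq_abs, Real.norm_eq_abs]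
    _ ≤ B1 * (K2 * ‖p - p'‖) + K1 * ‖p - p'‖ * B2 := by
        gcongr
        · exact hB1 p hp
        · exact hK2 p hp p' hp'
        · exact hK1 p hp p' hp'
        · exact hB2 p' hp'
    _ = (B1 * K2 + K1 * B2) * ‖p - p'‖ := by ring

lemma LLoc.mul {f g : Mat × ℝ → ℝ} (hf : LLoc f) (hg : LLoc g) :
    LLoc (fun p => f p * g p) := hf.smul hg

omit [NormedSpace ℝ F] in
lemma LLoc_const (c : F) : LLoc (fun _ : Mat × ℝ => c) := by
  intro R hR
  exact ⟨0, le_refl _, fun p _ p' _ => by simp⟩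

lemma LLoc_clm (L : (Mat × ℝ) →L[ℝ] F) : LLoc (fun p => L p) := by
  intro R hR
  refine ⟨‖L‖, norm_nonneg _, fun p _ p' _ => ?_⟩
  rw [← map_sub]
  exact L.le_opNorm _

lemma LLoc.max0 {f : Mat × ℝ → ℝ} (hf : LLoc f) : LLoc (fun p => max (f p) 0) := by
  intro R hR
  obtain ⟨K, hK0, hK⟩ := hf R hR
  refine ⟨K, hK0, fun p hp p' hp' => ?_⟩
  have h1 : |max (f p) 0 - max (f p') 0| ≤ |f p - f p'| := abs_max_sub_max_le_abs _ _ _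
  calc ‖max (f p) 0 - max (f p') 0‖ ≤ |f p - f p'| := by simpa [Real.norm_eq_abs] using h1
    _ ≤ K * ‖p - p'‖ := by simpa [Real.norm_eq_abs] using hK p hp p' hp'

lemma LLoc_contDiff {f : Mat × ℝ → F} (hf : ContDiff ℝ 1 f) : LLoc f := by
  intro R hR
  have hcomp : IsCompact (closedBall (0 : Mat × ℝ) R) := isCompact_closedBall _ _
  have hcont : ContinuousOn (fun p => ‖fderiv ℝ f p‖) (closedBall (0 : Mat × ℝ) R) :=
    ((contDiff_one_iff_fderiv.mp hf).2.norm).continuousOn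
  obtain ⟨C, hC⟩ := hcomp.exists_bound_of_continuousOn hcont
  have hC0 : 0 ≤ C := le_trans (norm_nonneg _) (by
    simpa [Real.norm_eq_abs, abs_of_nonneg (norm_nonneg _)] using
      hC 0 (mem_closedBall_self hR.le))
  refine ⟨C, hC0, fun p hp p' hp' => ?_⟩
  exact (convex_closedBall _ _).norm_image_sub_le_of_norm_fderiv_le
    (fun x _ => (contDiff_one_iff_fderiv.mp hf).1 x)
    (fun x hx => by simpa [Real.norm_eq_abs, abs_of_nonneg (norm_nonneg _)] using hC x hx)
    hp' hp

end StmtAux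

namespace StmtAux
set_option linter.unusedSectionVars false

def em (i j : Fin 2) : (Mat × ℝ) →L[ℝ] ℝ :=
  (ContinuousLinearMap.proj j).comp
    ((ContinuousLinearMap.proj i).comp (ContinuousLinearMap.fst ℝ Mat ℝ))

def Tc : (Mat × ℝ) →L[ℝ] ℝ := em 0 0 + em 1 1

def Sc : (Mat × ℝ) →L[ℝ] ℝ := ContinuousLinearMap.snd ℝ Mat ℝ

@[simp] lemma em_apply (i j : Fin 2) (p : Mat × ℝ) : em i j p = p.1 i j := rfl
@[simp] lemma Tc_apply (p : Mat × ℝ) : Tc p = p.1 0 0 + p.1 1 1 := rfl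
@[simp] lemma Sc_apply (p : Mat × ℝ) : Sc p = p.2 := rfl

variable (μ κ η : ℝ)

def W1 (p : Mat × ℝ) : ℝ :=
  (Sc p ^ 2 + η) * (μ * ((em 0 0 p ^ 2 + em 0 1 p ^ 2 + em 1 0 p ^ 2 + em 1 1 p ^ 2)
    - Tc p ^ 2 / 2))

def W2 (p : Mat × ℝ) : ℝ := ((Sc p * Sc p + η) * (κ / 2)) * qq (Tc p)

def W3 (p : Mat × ℝ) : ℝ := (κ / 2) * qq (-(Tc p))

lemma Wdens_decomp :
    (fun p : Mat × ℝ => Wdens μ κ η p.1 p.2) = fun p => W1 μ η p + W2 κ η p + W3 κ p := by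
  funext p
  simp only [Wdens, W1, W2, W3, frobSq, dev, volP, volM, mtrace, idm, qq,
    Fin.sum_univ_two, em_apply, Tc_apply, Sc_apply]
  norm_num
  ring

lemma W1_contDiff : ContDiff ℝ ∞ (W1 μ η) := by
  have hS : ContDiff ℝ ∞ (fun p : Mat × ℝ => Sc p) := Sc.contDiff
  have hT : ContDiff ℝ ∞ (fun p : Mat × ℝ => Tc p) := Tc.contDiff
  have he : ∀ i j, ContDiff ℝ ∞ (fun p : Mat × ℝ => em i j p) := fun i j => (em i j).contDiff
  exact ((hS.pow 2).add contDiff_const).mul (contDiff_const.mul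
    (((((he 0 0).pow 2).add ((he 0 1).pow 2)).add ((he 1 0).pow 2)).add ((he 1 1).pow 2)
      |>.sub ((hT.pow 2).div_const 2)))

lemma W2_contDiff : ContDiff ℝ 1 (W2 κ η) := by
  have hS : ContDiff ℝ 1 (fun p : Mat × ℝ => Sc p) := Sc.contDiff
  exact (((hS.mul hS).add contDiff_const).mul contDiff_const).mul (qq_contDiff.comp Tc.contDiff)

lemma W3_contDiff : ContDiff ℝ 1 (W3 κ) := by
  exact contDiff_const.mul (qq_contDiff.comp Tc.contDiff.neg)

def F2 (p : Mat × ℝ) : (Mat × ℝ) →L[ℝ] ℝ :=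
  ((Sc p * Sc p + η) * (κ / 2) * (2 * max (Tc p) 0)) • Tc
    + ((max (Tc p) 0 * max (Tc p) 0) * (κ * Sc p)) • Sc

def F3 (p : Mat × ℝ) : (Mat × ℝ) →L[ℝ] ℝ :=
  (-(κ / 2) * (2 * max (-(Tc p)) 0)) • Tc

lemma W2_hasFDerivAt (p : Mat × ℝ) : HasFDerivAt (W2 κ η) (F2 κ η p) p := by
  have hS : HasFDerivAt (fun p : Mat × ℝ => Sc p) Sc p := Sc.hasFDerivAt
  have hT : HasFDerivAt (fun p : Mat × ℝ => Tc p) Tc p := Tc.hasFDerivAt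
  have hg := ((hS.mul hS).add_const η).mul_const (κ / 2)
  have hu : HasFDerivAt (fun p : Mat × ℝ => qq (Tc p)) ((2 * max (Tc p) 0) • Tc) p :=
    (qq_hasDerivAt (Tc p)).comp_hasFDerivAt p hT
  have := hg.mul hu
  refine this.congr_fderiv ?_
  apply ContinuousLinearMap.ext
  intro x
  simp only [F2, qq, ContinuousLinearMap.add_apply, ContinuousLinearMap.coe_smul',
    Pi.smul_apply, smul_eq_mul, Pi.mul_apply]
  ring

lemma W3_hasFDerivAt (p : Mat × ℝ) : HasFDerivAt (W3 κ) (F3 κ p) p := by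
  have hT : HasFDerivAt (fun p : Mat × ℝ => -(Tc p)) (-Tc) p := Tc.hasFDerivAt.neg
  have hu : HasFDerivAt (fun p : Mat × ℝ => qq (-(Tc p))) ((2 * max (-(Tc p)) 0) • (-Tc)) p :=
    (qq_hasDerivAt (-(Tc p))).comp_hasFDerivAt (f := fun p : Mat × ℝ => -(Tc p)) p hT
  have := hu.const_mul (κ / 2)
  refine this.congr_fderiv ?_
  apply ContinuousLinearMap.ext
  intro x
  simp only [F3, ContinuousLinearMap.coe_smul', ContinuousLinearMap.neg_apply,
    Pi.smul_apply, smul_eq_mul]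
  ring

lemma W_hasFDerivAt (p : Mat × ℝ) :
    HasFDerivAt (fun p : Mat × ℝ => Wdens μ κ η p.1 p.2)
      (fderiv ℝ (W1 μ η) p + F2 κ η p + F3 κ p) p := by
  rw [Wdens_decomp]
  exact ((((W1_contDiff μ η).differentiable (by norm_num)) p).hasFDerivAt.add
    (W2_hasFDerivAt κ η p)).add (W3_hasFDerivAt κ p)

lemma W_contDiff : ContDiff ℝ 1 (fun p : Mat × ℝ => Wdens μ κ η p.1 p.2) := by
  rw [Wdens_decomp]
  exact (((W1_contDiff μ η).of_le (by exact_mod_cast le_top)).add (W2_contDiff κ η)).add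
    (W3_contDiff κ)

lemma fderiv_W_LLoc : LLoc (fderiv ℝ (fun p : Mat × ℝ => Wdens μ κ η p.1 p.2)) := by
  have heq : fderiv ℝ (fun p : Mat × ℝ => Wdens μ κ η p.1 p.2)
      = fun p => fderiv ℝ (W1 μ η) p + F2 κ η p + F3 κ p :=
    funext fun p => (W_hasFDerivAt μ κ η p).fderiv
  rw [heq]
  have h1 : LLoc (fderiv ℝ (W1 μ η)) := by
    refine LLoc_contDiff ?_
    have := (contDiff_infty_iff_fderiv.mp (W1_contDiff μ η)).2
    exact this.of_le (by exact_mod_cast le_top)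
  have hT : LLoc (fun p : Mat × ℝ => Tc p) := LLoc_clm Tc
  have hS : LLoc (fun p : Mat × ℝ => Sc p) := LLoc_clm Sc
  have hTn : LLoc (fun p : Mat × ℝ => -(Tc p)) := by
    have := LLoc_clm (-Tc)
    simpa using this
  have h2 : LLoc (F2 κ η) := by
    refine LLoc.add (LLoc.smul ?_ (LLoc_const Tc)) (LLoc.smul ?_ (LLoc_const Sc))
    · exact (((hS.mul hS).add (LLoc_const η)).mul (LLoc_const (κ/2))).mul
        ((LLoc_const 2).mul hT.max0)
    · exact (hT.max0.mul hT.max0).mul ((LLoc_const κ).mul hS)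
  have h3 : LLoc (F3 κ) := by
    refine LLoc.smul ?_ (LLoc_const Tc)
    exact (LLoc_const (-(κ/2))).mul ((LLoc_const 2).mul hTn.max0)
  exact (h1.add h2).add h3

end StmtAux

namespace StmtAux
set_option linter.unusedSectionVars false

lemma frobSq_nonneg (M : Mat) : 0 ≤ frobSq M :=
  Finset.sum_nonneg fun i _ => Finset.sum_nonneg fun j _ => sq_nonneg _

lemma half_trace_sq_le (N : Mat) : (mtrace N) ^ 2 / 2 ≤ frobSq N := by
  simp only [mtrace, frobSq, Fin.sum_univ_two]
  nlinarith [sq_nonneg (N 0 0 - N 1 1), sq_nonneg (N 0 1), sq_nonneg (N 1 0)]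

lemma max_sq_le (x y : ℝ) :
    (max x 0 - max y 0) ^ 2 ≤ (max x 0 - max y 0) * (x - y) := by
  rcases le_total x 0 with hx | hx <;> rcases le_total y 0 with hy | hy
  · simp [max_eq_right hx, max_eq_right hy]
  · rw [max_eq_right hx, max_eq_left hy]; nlinarith
  · rw [max_eq_left hx, max_eq_right hy]; nlinarith
  · rw [max_eq_left hx, max_eq_left hy]; nlinarith

lemma innerA (μ κ η v : ℝ) (M₁ M₂ : Mat) :
    matInner (DWdens μ κ η M₁ v - DWdens μ κ η M₂ v) (M₁ - M₂)
      = 2*(v^2+η)*μ*(frobSq (M₁-M₂) - (mtrace M₁ - mtrace M₂)^2/2)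
        + (v^2+η)*κ*((max (mtrace M₁) 0 - max (mtrace M₂) 0)*(mtrace M₁ - mtrace M₂))
        - κ*((max (-(mtrace M₁)) 0 - max (-(mtrace M₂)) 0)*(mtrace M₁ - mtrace M₂)) := by
  simp only [matInner, DWdens, dev, volP, volM, mtrace, idm, frobSq, Fin.sum_univ_two,
    Pi.sub_apply]
  norm_num
  ring

lemma normB (μ κ η v : ℝ) (M₁ M₂ : Mat) :
    frobSq (DWdens μ κ η M₁ v - DWdens μ κ η M₂ v)
      = 4*(v^2+η)^2*μ^2*(frobSq (M₁-M₂) - (mtrace M₁ - mtrace M₂)^2/2)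
        + 2*((v^2+η)*κ*(max (mtrace M₁) 0 - max (mtrace M₂) 0)
             - κ*(max (-(mtrace M₁)) 0 - max (-(mtrace M₂)) 0))^2 := by
  simp only [matInner, DWdens, dev, volP, volM, mtrace, idm, frobSq, Fin.sum_univ_two,
    Pi.sub_apply]
  norm_num
  ring

lemma DWdens_zero (μ κ η v : ℝ) : DWdens μ κ η 0 v = 0 := by
  funext i j
  simp [DWdens, dev, volP, volM, mtrace, idm]

lemma mtrace_sub (M₁ M₂ : Mat) : mtrace (M₁ - M₂) = mtrace M₁ - mtrace M₂ := by
  simp only [mtrace, Pi.sub_apply]; ring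

lemma Wdens_dir (μ κ η v : ℝ) (M H : Mat) :
    HasDerivAt (fun s : ℝ => Wdens μ κ η (M + s • H) v)
      (matInner (DWdens μ κ η M v) H) 0 := by
  set a := mtrace M with ha
  set b := mtrace H with hb0
  have hfun : (fun s : ℝ => Wdens μ κ η (M + s • H) v)
      = fun s => (v^2+η)*(μ*((frobSq M + 2*(matInner M H)*s + frobSq H*s^2) - (a+s*b)^2/2)
          + (κ/2)*qq (a+s*b)) + (κ/2)*qq (-(a+s*b)) := by
    funext s
    have h1 : mtrace (M + s • H) = a + s*b := by
      simp only [mtrace, Pi.add_apply, Pi.smul_apply, smul_eq_mul, ha, hb0]; ring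
    have h2 : frobSq (M + s • H) = frobSq M + 2*(matInner M H)*s + frobSq H*s^2 := by
      simp only [frobSq, matInner, Fin.sum_univ_two, Pi.add_apply, Pi.smul_apply, smul_eq_mul]
      ring
    simp only [Wdens, dev, volP, volM, idm, frobSq, matInner, qq, Fin.sum_univ_two,
      Pi.add_apply, Pi.smul_apply, smul_eq_mul, ← h1]
    simp only [mtrace, Pi.add_apply, Pi.smul_apply, smul_eq_mul]
    norm_num
    ring
  rw [hfun]
  have hb : HasDerivAt (fun s : ℝ => a + s*b) (1*b) 0 :=
    ((hasDerivAt_id 0).mul_const b).const_add a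
  have hq1 : HasDerivAt (fun s : ℝ => qq (a+s*b)) (2*max (a+0*b) 0*(1*b)) 0 :=
    (qq_hasDerivAt (a+0*b)).comp (h := fun s : ℝ => a+s*b) 0 hb
  have hq2 : HasDerivAt (fun s : ℝ => qq (-(a+s*b))) (2*max (-(a+0*b)) 0*(-(1*b))) 0 :=
    (qq_hasDerivAt (-(a+0*b))).comp (h := -fun s : ℝ => a+s*b) 0 hb.neg
  have hsq : HasDerivAt (fun s : ℝ => (a+s*b)^2) ((2:ℕ)*(a+0*b)^1*(1*b)) 0 := hb.pow 2
  have hlin : HasDerivAt (fun s : ℝ => 2*(matInner M H)*s) (2*(matInner M H)*1) 0 :=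
    (hasDerivAt_id 0).const_mul (2*(matInner M H))
  have hquad : HasDerivAt (fun s : ℝ => frobSq H*s^2) (frobSq H*((2:ℕ)*(0:ℝ)^1)) 0 :=
    (hasDerivAt_pow 2 0).const_mul (frobSq H)
  have hpoly : HasDerivAt (fun s : ℝ => frobSq M + 2*(matInner M H)*s + frobSq H*s^2)
      (2*(matInner M H)*1 + frobSq H*((2:ℕ)*(0:ℝ)^1)) 0 := (hlin.const_add (frobSq M)).add hquad
  have hall := (((hpoly.sub (hsq.div_const 2)).const_mul μ).add
      (hq1.const_mul (κ/2))).const_mul (v^2+η) |>.add (hq2.const_mul (κ/2))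
  refine hall.congr_deriv ?_
  simp only [matInner, DWdens, dev, volP, volM, mtrace, idm, frobSq, Fin.sum_univ_two, ha, hb0]
  norm_num
  ring

end StmtAux

namespace StmtAux
set_option linter.unusedSectionVars false

lemma scalarMono' (μ κ η v P Q w FN : ℝ) (hμ : 0 < μ) (hκ : 0 < κ) (hη : 0 < η)
    (hv0 : 0 ≤ v) (hv1 : v ≤ 1) (hPw : P^2 ≤ P*w) (hQw : Q^2 ≤ -(Q*w))
    (hsum : P - Q = w) (htr : w^2/2 ≤ FN) :
    min (2*η*μ) (2*min η 1*κ) * FN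
      ≤ 2*(v^2+η)*μ*(FN - w^2/2) + (v^2+η)*κ*(P*w) - κ*(Q*w) := by
  have hPw' : 0 ≤ P*w := le_trans (sq_nonneg P) hPw
  have hQw' : 0 ≤ -(Q*w) := le_trans (sq_nonneg Q) hQw
  have hw2 : w^2 = P*w - Q*w := by linear_combination (-w) * hsum
  have hA : 0 ≤ FN - w^2/2 := by linarith
  have hm : min η 1 ≤ v^2+η := le_trans (min_le_left _ _) (by nlinarith)
  have hmin0 : 0 < min η 1 := lt_min hη one_pos
  have h1 : 0 ≤ (2*η*μ - min (2*η*μ) (2*min η 1*κ)) * (FN - w^2/2) :=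
    mul_nonneg (sub_nonneg.mpr (min_le_left _ _)) hA
  have h2 : 0 ≤ (2*min η 1*κ - min (2*η*μ) (2*min η 1*κ)) * w^2 :=
    mul_nonneg (sub_nonneg.mpr (min_le_right _ _)) (sq_nonneg w)
  have h3 : 0 ≤ μ * (FN - w^2/2) * v^2 := mul_nonneg (mul_nonneg hμ.le hA) (sq_nonneg v)
  have h4 : min η 1 * (κ * (P*w)) ≤ (v^2+η) * (κ * (P*w)) :=
    mul_le_mul_of_nonneg_right hm (mul_nonneg hκ.le hPw')
  have h5 : min η 1 * (κ * (-(Q*w))) ≤ 1 * (κ * (-(Q*w))) :=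
    mul_le_mul_of_nonneg_right (min_le_right η 1) (mul_nonneg hκ.le hQw')
  have h6 : min η 1 * κ * w^2 = min η 1 * κ * (P*w) - min η 1 * κ * (Q*w) := by
    linear_combination (min η 1 * κ) * hw2
  linarith

lemma scalarLipB' (μ κ η v P Q w FN : ℝ) (hμ : 0 < μ) (hκ : 0 < κ) (hη : 0 < η)
    (hv0 : 0 ≤ v) (hv1 : v ≤ 1) (hPabs : |P| ≤ |w|) (hQabs : |Q| ≤ |w|)
    (htr : w^2/2 ≤ FN) (hFN : 0 ≤ FN) :
    4*(v^2+η)^2*μ^2*(FN - w^2/2) + 2*((v^2+η)*κ*P - κ*Q)^2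
      ≤ (8*((1+η)*μ)^2 + 8*κ^2*(2+η)^2) * FN := by
  have ha0 : 0 < v^2+η := by positivity
  have hXabs : |(v^2+η)*κ*P - κ*Q| ≤ κ*(2+η)*|w| := by
    calc |(v^2+η)*κ*P - κ*Q| ≤ |(v^2+η)*κ*P| + |κ*Q| := abs_sub ((v^2+η)*κ*P) (κ*Q)
      _ = (v^2+η)*κ*|P| + κ*|Q| := by
          rw [abs_mul, abs_mul, abs_mul, abs_of_pos ha0, abs_of_pos hκ]
      _ ≤ (1+η)*κ*|w| + κ*|w| := by
          have gv : v^2 ≤ 1 := by nlinarith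
          have gk : (v^2+η)*κ ≤ (1+η)*κ :=
            mul_le_mul_of_nonneg_right (by linarith) hκ.le
          have g1 : (v^2+η)*κ*|P| ≤ (1+η)*κ*|w| :=
            mul_le_mul gk hPabs (abs_nonneg _) (by positivity)
          have g2 : κ*|Q| ≤ κ*|w| := mul_le_mul_of_nonneg_left hQabs hκ.le
          linarith
      _ = κ*(2+η)*|w| := by ring
  have hX2 : ((v^2+η)*κ*P - κ*Q)^2 ≤ κ^2*(2+η)^2*w^2 := by
    have h1 := pow_le_pow_left₀ (abs_nonneg _) hXabs 2
    rw [sq_abs] at h1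
    calc ((v^2+η)*κ*P - κ*Q)^2 ≤ (κ*(2+η)*|w|)^2 := h1
      _ = κ^2*(2+η)^2*w^2 := by rw [mul_pow, mul_pow, sq_abs]
  have hle : v^2+η ≤ 1+η := by nlinarith
  have haa : (v^2+η)^2 ≤ (1+η)^2 := pow_le_pow_left₀ ha0.le hle 2
  have hA : 0 ≤ FN - w^2/2 := by linarith
  have hw2 : w^2 ≤ 2*FN := by linarith
  nlinarith [mul_le_mul_of_nonneg_right (mul_le_mul_of_nonneg_right haa hA) (sq_nonneg μ),
    mul_nonneg (mul_nonneg (sq_nonneg (1+η)) (sq_nonneg μ)) (sq_nonneg w),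
    mul_nonneg (mul_nonneg (sq_nonneg (1+η)) (sq_nonneg μ)) hFN,
    hX2,
    mul_nonneg (mul_nonneg (sq_nonneg κ) (sq_nonneg (2+η))) (sub_nonneg.mpr hw2),
    mul_nonneg (mul_nonneg (sq_nonneg κ) (sq_nonneg (2+η))) hFN]

lemma hQw_of (t1 t2 : ℝ) :
    (max (-t1) 0 - max (-t2) 0)^2 ≤ -((max (-t1) 0 - max (-t2) 0)*(t1-t2)) := by
  nlinarith [max_sq_le (-t1) (-t2)]

lemma hsum_of (t1 t2 : ℝ) :
    (max t1 0 - max t2 0) - (max (-t1) 0 - max (-t2) 0) = t1 - t2 := by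
  have h1 := max_zero_sub_max_neg_zero_eq_self t1
  have h2 := max_zero_sub_max_neg_zero_eq_self t2
  linarith

lemma hQabs_of (t1 t2 : ℝ) : |max (-t1) 0 - max (-t2) 0| ≤ |t1 - t2| := by
  have h := abs_max_sub_max_le_abs (-t1) (-t2) 0
  have e : (-t1) - (-t2) = -(t1 - t2) := by ring
  rw [e, abs_neg] at h
  exact h

lemma htr_of (N₁ N₂ : Mat) : (mtrace N₁ - mtrace N₂)^2/2 ≤ frobSq (N₁ - N₂) := by
  have := half_trace_sq_le (N₁ - N₂)
  rw [mtrace_sub] at this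
  linarith

end StmtAux

/-- Lemma 3.1 of the paper.  The density `W : M²_sym × ℝ → ℝ₊` is of class
`C^{1,1}_loc`; `∂_ε W` is given by `DWdens` (in the directional sense); `∂_ε W(0,v) = 0`; and
there are constants `c, C > 0` such that for every `v ∈ [0,1]` and all symmetric `ε₁, ε₂`:
(i) `(∂_ε W(ε₁,v) - ∂_ε W(ε₂,v)) : (ε₁ - ε₂) ≥ c |ε₁ - ε₂|²`;
(ii) `|∂_ε W(ε₁,v) - ∂_ε W(ε₂,v)| ≤ C |ε₁ - ε₂|`;
and consequently `|∂_ε W(ε,v)| ≤ C |ε|`. -/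
theorem stmt0 (μ κ η : ℝ) (hμ : 0 < μ) (hκ : 0 < κ) (hη : 0 < η) :
    -- `W` takes values in `ℝ₊`
    (∀ M : Mat, ∀ v : ℝ, 0 ≤ Wdens μ κ η M v) ∧
    -- `W` is of class `C^{1,1}_loc` (jointly in `(ε, v)`): it is `C¹` and its derivative is
    -- locally Lipschitz
    ContDiff ℝ 1 (fun p : Mat × ℝ => Wdens μ κ η p.1 p.2) ∧
    (∀ K : Set (Mat × ℝ), IsCompact K → ∃ C : NNReal,
      LipschitzOnWith C (fderiv ℝ (fun p : Mat × ℝ => Wdens μ κ η p.1 p.2)) K) ∧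
    -- `DWdens` is the partial derivative of `W` with respect to `ε` (directional derivatives
    -- along symmetric matrices)
    (∀ v : ℝ, ∀ M H : Mat, IsSym M → IsSym H →
      HasDerivAt (fun s : ℝ => Wdens μ κ η (M + s • H) v)
        (matInner (DWdens μ κ η M v) H) 0) ∧
    -- `∂_ε W(0,v) = 0`
    (∀ v : ℝ, DWdens μ κ η 0 v = 0) ∧
    -- the quantitative monotonicity and Lipschitz estimates, with the consequence
    -- `|∂_ε W(ε,v)| ≤ C |ε|`
    (∃ c > (0 : ℝ), ∃ C > (0 : ℝ), ∀ v ∈ Set.Icc (0 : ℝ) 1, ∀ M₁ M₂ : Mat,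
      IsSym M₁ → IsSym M₂ →
      (c * frobSq (M₁ - M₂) ≤
        matInner (DWdens μ κ η M₁ v - DWdens μ κ η M₂ v) (M₁ - M₂)) ∧
      frobNorm (DWdens μ κ η M₁ v - DWdens μ κ η M₂ v) ≤ C * frobNorm (M₁ - M₂) ∧
      frobNorm (DWdens μ κ η M₁ v) ≤ C * frobNorm M₁) := by
  refine ⟨?_, StmtAux.W_contDiff μ κ η, ?_, fun v M H _ _ => StmtAux.Wdens_dir μ κ η v M H,
    fun v => StmtAux.DWdens_zero μ κ η v, ?_⟩
  · intro M v
    exact add_nonneg (mul_nonneg (add_nonneg (sq_nonneg v) hη.le)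
      (add_nonneg (mul_nonneg hμ.le (StmtAux.frobSq_nonneg _))
        (mul_nonneg hκ.le (StmtAux.frobSq_nonneg _))))
      (mul_nonneg hκ.le (StmtAux.frobSq_nonneg _))
  · intro K hK
    obtain ⟨r, hr⟩ := (Metric.isBounded_iff_subset_closedBall 0).mp hK.isBounded
    have hR : 0 < max r 1 := lt_of_lt_of_le one_pos (le_max_right r 1)
    obtain ⟨K₀, hK₀0, hK₀⟩ := StmtAux.fderiv_W_LLoc μ κ η (max r 1) hR
    refine ⟨⟨K₀, hK₀0⟩, ?_⟩
    apply LipschitzOnWith.of_dist_le_mul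
    intro x hx y hy
    have hxm : x ∈ closedBall (0 : Mat × ℝ) (max r 1) :=
      closedBall_subset_closedBall (le_max_left r 1) (hr hx)
    have hym : y ∈ closedBall (0 : Mat × ℝ) (max r 1) :=
      closedBall_subset_closedBall (le_max_left r 1) (hr hy)
    show dist _ _ ≤ K₀ * dist x y
    simpa [dist_eq_norm] using hK₀ x hxm y hym
  · have hmin0 : 0 < min η 1 := lt_min hη one_pos
    have hc : 0 < min (2*η*μ) (2*min η 1*κ) := lt_min (by positivity) (by positivity)
    have hC₀ : 0 < 8*((1+η)*μ)^2 + 8*κ^2*(2+η)^2 := by positivity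
    have hC : 0 < Real.sqrt (8*((1+η)*μ)^2 + 8*κ^2*(2+η)^2) := Real.sqrt_pos.mpr hC₀
    refine ⟨min (2*η*μ) (2*min η 1*κ), hc,
      Real.sqrt (8*((1+η)*μ)^2 + 8*κ^2*(2+η)^2), hC, ?_⟩
    intro v hv M₁ M₂ _ _
    have lip : ∀ N₁ N₂ : Mat,
        frobNorm (DWdens μ κ η N₁ v - DWdens μ κ η N₂ v)
          ≤ Real.sqrt (8*((1+η)*μ)^2 + 8*κ^2*(2+η)^2) * frobNorm (N₁ - N₂) := by
      intro N₁ N₂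
      have hbound : frobSq (DWdens μ κ η N₁ v - DWdens μ κ η N₂ v)
          ≤ (8*((1+η)*μ)^2 + 8*κ^2*(2+η)^2) * frobSq (N₁ - N₂) := by
        rw [StmtAux.normB μ κ η v N₁ N₂]
        exact StmtAux.scalarLipB' μ κ η v _ _ _ _ hμ hκ hη hv.1 hv.2
          (abs_max_sub_max_le_abs (mtrace N₁) (mtrace N₂) 0)
          (StmtAux.hQabs_of (mtrace N₁) (mtrace N₂))
          (StmtAux.htr_of N₁ N₂) (StmtAux.frobSq_nonneg _)
      calc frobNorm (DWdens μ κ η N₁ v - DWdens μ κ η N₂ v)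
          ≤ Real.sqrt ((8*((1+η)*μ)^2 + 8*κ^2*(2+η)^2) * frobSq (N₁ - N₂)) :=
            Real.sqrt_le_sqrt hbound
        _ = Real.sqrt (8*((1+η)*μ)^2 + 8*κ^2*(2+η)^2) * frobNorm (N₁ - N₂) := by
            rw [Real.sqrt_mul hC₀.le, frobNorm]
    refine ⟨?_, lip M₁ M₂, ?_⟩
    · rw [StmtAux.innerA μ κ η v M₁ M₂]
      exact StmtAux.scalarMono' μ κ η v _ _ _ _ hμ hκ hη hv.1 hv.2
        (StmtAux.max_sq_le (mtrace M₁) (mtrace M₂))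
        (StmtAux.hQw_of (mtrace M₁) (mtrace M₂))
        (StmtAux.hsum_of (mtrace M₁) (mtrace M₂))
        (StmtAux.htr_of M₁ M₂)
    · have h := lip M₁ 0
      simpa [StmtAux.DWdens_zero μ κ η v, sub_zero] using h
end
end

section
/- For every p ∈ (2,q] and every M > 0 there exists C > 0 such that the following holds. Let u₁, u₂ ∈ W^{1,p}(Ω;ℝ²) with ‖u₁‖_{W^{1,p}}, ‖u₂‖_{W^{1,p}} ≤ M, let v₀ ∈ 𝒱 with 0 ≤ v₀ ≤ 1, and let v_i := argmin{ℱ(u_i, v) : v ∈ 𝒱, v ≤ v₀} for i = 1,2. Then ‖v₁ − v₂‖_{H¹(Ω)} ≤ C ‖u₁ − u₂‖_{H¹(Ω;ℝ²)}. -/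
open MeasureTheory Filter Topology
open scoped RealInnerProductSpace

noncomputable section

/-- Points of the plane `ℝ²`. -/
abbrev Pt : Type := EuclideanSpace ℝ (Fin 2)

/-- The symmetric gradient `ε(u) = ½ (Du + Duᵀ)`. -/
def symGrad (u : Pt → Pt) (x : Pt) : Mat := fun i j =>
  (fderiv ℝ u x (EuclideanSpace.single j 1) i + fderiv ℝ u x (EuclideanSpace.single i 1) j) / 2

/-- The setting of the phase-field model: `Ω ⊂ ℝ²` bounded, connected, open; a Dirichlet part
`∂_D Ω` of the boundary; material constants `μ, κ, η, G_c > 0`; the exponent `q > 2`; a loading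
path `g(s) = α(s) ĝ` with `ĝ ∈ W^{1,q}(Ω;ℝ²)` and `α ∈ C¹([0,1])`. -/
structure PFSetting : Type where
  Ω : Set Pt
  DΩ : Set Pt
  μ : ℝ
  κ : ℝ
  η : ℝ
  Gc : ℝ
  q : ℝ
  ghat : Pt → Pt
  α : ℝ → ℝ
  hΩopen : IsOpen Ω
  hΩbdd : Bornology.IsBounded Ω
  hΩconn : IsConnected Ω
  hDΩ : DΩ ⊆ frontier Ω
  hμ : 0 < μ
  hκ : 0 < κ
  hη : 0 < η
  hGc : 0 < Gc
  hq : 2 < q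
  hα : ContDiffOn ℝ 1 α (Set.Icc 0 1)
  hghat_diff : ∀ x ∈ Ω, DifferentiableAt ℝ ghat x
  hghat_Lq : MemLp ghat (ENNReal.ofReal q) (volume.restrict Ω)
  hghat_dLq : MemLp (fun x => ‖fderiv ℝ ghat x‖) (ENNReal.ofReal q) (volume.restrict Ω)

namespace PFSetting

variable (S : PFSetting)

/-- `W₊(ε) = μ|ε_d|² + κ|ε_v⁺|² (+ δ)`; the parameter `δ ≥ 0` is the modification of §5
(take `δ = 0` for the standard phase-field energy). -/
def Wplus (δ : ℝ) (M : Mat) : ℝ := S.μ * frobSq (dev M) + S.κ * frobSq (volP M) + δ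

/-- `W₋(ε) = κ|ε_v⁻|²`. -/
def Wminus (M : Mat) : ℝ := S.κ * frobSq (volM M)

/-- Energy density `W(ε,v) = (v² + η) W₊(ε) + W₋(ε)`. -/
def Wd (δ : ℝ) (M : Mat) (v : ℝ) : ℝ := (v ^ 2 + S.η) * S.Wplus δ M + S.Wminus M

/-- Elastic energy `ℰ(u,v) = ∫_Ω W(ε(u), v) dx`. -/
def E (δ : ℝ) (u : Pt → Pt) (v : Pt → ℝ) : ℝ := ∫ x in S.Ω, S.Wd δ (symGrad u x) (v x)

/-- Dissipation `ℒ(v) = ½ ∫_Ω (v-1)² + |∇v|² dx`  (the `AT₂` functional). -/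
def L (v : Pt → ℝ) : ℝ := (1 / 2) * ∫ x in S.Ω, (v x - 1) ^ 2 + ‖gradient v x‖ ^ 2

/-- Total energy `ℱ = ℰ + G_c ℒ`. -/
def F (δ : ℝ) (u : Pt → Pt) (v : Pt → ℝ) : ℝ := S.E δ u v + S.Gc * S.L v

/-- `v ∈ H¹(Ω)` (surrogate). -/
def MemH1 (v : Pt → ℝ) : Prop :=
  (∀ x ∈ S.Ω, DifferentiableAt ℝ v x) ∧
  MemLp v 2 (volume.restrict S.Ω) ∧
  MemLp (fun x => ‖gradient v x‖) 2 (volume.restrict S.Ω)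

/-- `v ∈ 𝒱 = H¹(Ω) ∩ L^∞(Ω)`. -/
def MemV (v : Pt → ℝ) : Prop := S.MemH1 v ∧ ∃ C, ∀ x ∈ S.Ω, |v x| ≤ C

/-- `u ∈ H¹(Ω;ℝ²)` (surrogate). -/
def MemH1v (u : Pt → Pt) : Prop :=
  (∀ x ∈ S.Ω, DifferentiableAt ℝ u x) ∧
  MemLp u 2 (volume.restrict S.Ω) ∧
  MemLp (fun x => ‖fderiv ℝ u x‖) 2 (volume.restrict S.Ω)

/-- `u ∈ W^{1,p}(Ω;ℝ²)` (surrogate). -/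
def MemW1p (p : ℝ) (u : Pt → Pt) : Prop :=
  (∀ x ∈ S.Ω, DifferentiableAt ℝ u x) ∧
  MemLp u (ENNReal.ofReal p) (volume.restrict S.Ω) ∧
  MemLp (fun x => ‖fderiv ℝ u x‖) (ENNReal.ofReal p) (volume.restrict S.Ω)

/-- `u ∈ 𝒰(s)`: `H¹` displacements with `u = α(s) ĝ` on `∂_D Ω`. -/
def MemU (s : ℝ) (u : Pt → Pt) : Prop :=
  S.MemH1v u ∧ ∀ x ∈ S.DΩ, u x = S.α s • S.ghat x

/-- `ξ ∈ Ξ`: admissible (nonpositive) phase-field variations. -/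
def MemXi (ξ : Pt → ℝ) : Prop := S.MemV ξ ∧ ∀ x ∈ S.Ω, ξ x ≤ 0

/-- `φ ∈ Φ`: displacement variations vanishing on `∂_D Ω`. -/
def MemPhi (φ : Pt → Pt) : Prop := S.MemH1v φ ∧ ∀ x ∈ S.DΩ, φ x = 0

/-- `H¹(Ω)` norm. -/
def H1norm (v : Pt → ℝ) : ℝ := Real.sqrt (∫ x in S.Ω, (v x) ^ 2 + ‖gradient v x‖ ^ 2)

/-- `H¹(Ω;ℝ²)` norm. -/
def H1normV (u : Pt → Pt) : ℝ := Real.sqrt (∫ x in S.Ω, ‖u x‖ ^ 2 + ‖fderiv ℝ u x‖ ^ 2)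

/-- `W^{1,p}(Ω;ℝ²)` norm. -/
def W1pNorm (p : ℝ) (u : Pt → Pt) : ℝ :=
  (∫ x in S.Ω, ‖u x‖ ^ p + ‖fderiv ℝ u x‖ ^ p) ^ (1 / p)

/-- `L^r(Ω)` norm. -/
def LrNorm (r : ℝ) (v : Pt → ℝ) : ℝ := (∫ x in S.Ω, |v x| ^ r) ^ (1 / r)

/-- `u ∈ argmin { ℰ(·,v) : 𝒰(s) }`. -/
def IsElMin (δ s : ℝ) (v : Pt → ℝ) (u : Pt → Pt) : Prop :=
  S.MemU s u ∧ ∀ w, S.MemU s w → S.E δ u v ≤ S.E δ w v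

/-- `u ∈ argmin { ℱ(·,v) : 𝒰(s) }`. -/
def IsUMin (δ s : ℝ) (v : Pt → ℝ) (u : Pt → Pt) : Prop :=
  S.MemU s u ∧ ∀ w, S.MemU s w → S.F δ u v ≤ S.F δ w v

/-- `v ∈ argmin { ℱ(u,·) : v ∈ 𝒱, v ≤ vbar }`. -/
def IsVMin (δ : ℝ) (u : Pt → Pt) (vbar v : Pt → ℝ) : Prop :=
  S.MemV v ∧ (∀ x ∈ S.Ω, v x ≤ vbar x) ∧
  ∀ w, S.MemV w → (∀ x ∈ S.Ω, w x ≤ vbar x) → S.F δ u v ≤ S.F δ u w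

/-- Phase-field stress `σ(u,v) = 2ψ(v)(μ ε_d(u) + κ ε_v⁺(u)) - 2κ ε_v⁻(u)`. -/
def stress (u : Pt → Pt) (v : Pt → ℝ) (x : Pt) : Mat := fun i j =>
  2 * ((v x) ^ 2 + S.η) * (S.μ * dev (symGrad u x) i j + S.κ * volP (symGrad u x) i j)
    - 2 * S.κ * volM (symGrad u x) i j

/-- `∂_u ℱ(u,v)[φ] = ∫_Ω σ(u,v) : ε(φ) dx`. -/
def dFu (u : Pt → Pt) (v : Pt → ℝ) (φ : Pt → Pt) : ℝ :=
  ∫ x in S.Ω, matInner (S.stress u v x) (symGrad φ x)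

/-- `∂_v ℰ(u,v)[ξ] = ∫_Ω 2 v ξ W₊(ε(u)) dx`. -/
def dEv (δ : ℝ) (u : Pt → Pt) (v ξ : Pt → ℝ) : ℝ :=
  ∫ x in S.Ω, 2 * v x * ξ x * S.Wplus δ (symGrad u x)

/-- `dℒ(v)[ξ] = ∫_Ω (v-1) ξ + ∇v·∇ξ dx`. -/
def dL (v ξ : Pt → ℝ) : ℝ :=
  ∫ x in S.Ω, (v x - 1) * ξ x + ⟪gradient v x, gradient ξ x⟫

/-- `∂_v ℱ(u,v)[ξ] = ∂_v ℰ(u,v)[ξ] + G_c dℒ(v)[ξ]`. -/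
def dFv (δ : ℝ) (u : Pt → Pt) (v ξ : Pt → ℝ) : ℝ := S.dEv δ u v ξ + S.Gc * S.dL v ξ

/-- Reduced elastic energy `ℰ̃(s,v) = min { ℰ(u,v) : u ∈ 𝒰(s) }`. -/
def redE (δ s : ℝ) (v : Pt → ℝ) : ℝ := sInf {e | ∃ u, S.MemU s u ∧ e = S.E δ u v}

/-- `∂_v ℰ̃(t,v)[ξ] = ∫_Ω v ξ (W₊(ε(u_{t,v})) + δ) dx`, expressed through the elastic
minimizer `u = u_{t,v}` (paper's normalization). -/
def dredE (δ : ℝ) (u : Pt → Pt) (v ξ : Pt → ℝ) : ℝ :=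
  ∫ x in S.Ω, v x * ξ x * S.Wplus δ (symGrad u x)

/-- Maximal energy release rate
`𝒢_max(t,v) = sup { -∂_v ℰ̃(t,v)[ξ] : ξ ∈ Ξ, dℒ(v)[ξ] = 1 }`, expressed through the elastic
minimizer `u = u_{t,v}`. -/
def Gmax (δ : ℝ) (u : Pt → Pt) (v : Pt → ℝ) : ℝ :=
  sSup {g | ∃ ξ, S.MemXi ξ ∧ S.dL v ξ = 1 ∧ g = -(S.dredE δ u v ξ)}

/-- `H¹(Ω)` scalar product. -/
def H1inner (v w : Pt → ℝ) : ℝ :=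
  ∫ x in S.Ω, v x * w x + ⟪gradient v x, gradient w x⟫

/-- Weak `H¹(Ω)` convergence of a sequence. -/
def WeakH1Lim (vn : ℕ → Pt → ℝ) (v : Pt → ℝ) : Prop :=
  ∀ w, S.MemV w → Tendsto (fun n => S.H1inner (vn n) w) atTop (nhds (S.H1inner v w))

end PFSetting

/-- Kuratowski convergence of a sequence of subsets of `ℝ`: the Kuratowski lower limit
`Li A_n = {x : lim dist(x,A_n) = 0}` and upper limit `Ls A_n = {x : liminf dist(x,A_n) = 0}`
coincide with `I`. -/
def IsKuratowskiLimit (A : ℕ → Set ℝ) (I : Set ℝ) : Prop :=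
  I = {x | Filter.Tendsto (fun n => Metric.infDist x (A n)) Filter.atTop (nhds 0)} ∧
  I = {x | Filter.liminf (fun n => Metric.infDist x (A n)) Filter.atTop = 0}
section Stmt4Aux

open MeasureTheory

private lemma s4_young (d s Jv σ Q : ℝ) (hσ : 0 ≤ σ) (hQ : 0 ≤ Q) (hs : s^2 ≤ 4)
    (hJ : Jv^2 ≤ 2*σ*Q) : -(d*s*Jv) ≤ d^2*σ/2 + 4*Q := by
  have hprod : 0 ≤ 2*σ*Q := by positivity
  have a1 : d^2*s^2*Jv^2 ≤ d^2*s^2*(2*σ*Q) := mul_le_mul_of_nonneg_left hJ (by positivity)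
  have a2 : d^2*s^2*(2*σ*Q) ≤ d^2*4*(2*σ*Q) := by
    nlinarith [mul_nonneg (mul_nonneg (sq_nonneg d) (sub_nonneg.mpr hs)) hprod]
  have hB : 0 ≤ d^2*σ/2 + 4*Q := by positivity
  have h3 : (d*s*Jv)^2 ≤ (d^2*σ/2 + 4*Q)^2 := by nlinarith [sq_nonneg (d^2*σ/2 - 4*Q)]
  have h4 : |d*s*Jv| ≤ |d^2*σ/2 + 4*Q| := by
    rw [← Real.sqrt_sq_eq_abs, ← Real.sqrt_sq_eq_abs]
    exact Real.sqrt_le_sqrt h3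
  calc -(d*s*Jv) ≤ |d*s*Jv| := neg_le_abs _
  _ ≤ |d^2*σ/2 + 4*Q| := h4
  _ = d^2*σ/2 + 4*Q := abs_of_nonneg hB

private lemma s4_frobSq_nonneg (M : Mat) : 0 ≤ frobSq M :=
  Finset.sum_nonneg fun _ _ => Finset.sum_nonneg fun _ _ => sq_nonneg _

private lemma s4_frobSq_expand (M : Mat) :
    frobSq M = (M 0 0)^2 + (M 0 1)^2 + (M 1 0)^2 + (M 1 1)^2 := by
  simp [frobSq, Fin.sum_univ_two]; ring

private lemma s4_matInner_expand (M N : Mat) :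
    matInner M N = M 0 0 * N 0 0 + M 0 1 * N 0 1 + M 1 0 * N 1 0 + M 1 1 * N 1 1 := by
  simp [matInner, Fin.sum_univ_two]; ring

private lemma s4_CS (M N : Mat) : (matInner M N)^2 ≤ frobSq M * frobSq N := by
  rw [s4_matInner_expand, s4_frobSq_expand, s4_frobSq_expand]
  nlinarith [sq_nonneg (M 0 0 * N 0 1 - M 0 1 * N 0 0), sq_nonneg (M 0 0 * N 1 0 - M 1 0 * N 0 0),
    sq_nonneg (M 0 0 * N 1 1 - M 1 1 * N 0 0), sq_nonneg (M 0 1 * N 1 0 - M 1 0 * N 0 1),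
    sq_nonneg (M 0 1 * N 1 1 - M 1 1 * N 0 1), sq_nonneg (M 1 0 * N 1 1 - M 1 1 * N 1 0)]

private lemma s4_sq_diff (X Y : Mat) :
    frobSq X - frobSq Y
      = matInner (fun i j => X i j + Y i j) (fun i j => X i j - Y i j) := by
  rw [s4_frobSq_expand, s4_frobSq_expand, s4_matInner_expand]; ring

private lemma s4_sq_add (X Y : Mat) :
    frobSq (fun i j => X i j + Y i j) ≤ 2*frobSq X + 2*frobSq Y := by
  rw [s4_frobSq_expand, s4_frobSq_expand, s4_frobSq_expand]
  nlinarith [sq_nonneg (X 0 0 - Y 0 0), sq_nonneg (X 0 1 - Y 0 1),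
    sq_nonneg (X 1 0 - Y 1 0), sq_nonneg (X 1 1 - Y 1 1)]

private lemma s4_frobSq_dev (M : Mat) :
    frobSq (dev M) = frobSq M - (mtrace M)^2/2 := by
  rw [s4_frobSq_expand, s4_frobSq_expand]
  simp [dev, idm, mtrace]; ring

private lemma s4_frobSq_volP (M : Mat) :
    frobSq (volP M) = (max (mtrace M) 0)^2/2 := by
  rw [s4_frobSq_expand]
  simp [volP, idm]; ring

private lemma s4_frobSq_volM (M : Mat) :
    frobSq (volM M) = (max (-(mtrace M)) 0)^2/2 := by
  rw [s4_frobSq_expand]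
  simp [volM, idm]; ring

private lemma s4_maxsq (r : ℝ) : (max r 0)^2 ≤ r^2 := by
  rcases le_total r 0 with h | h
  · rw [max_eq_right h]; simpa using sq_nonneg r
  · rw [max_eq_left h]

private lemma s4_mtrace_sq (M : Mat) : (mtrace M)^2 ≤ 2 * frobSq M := by
  rw [s4_frobSq_expand]
  simp only [mtrace]
  nlinarith [sq_nonneg (M 0 0 - M 1 1), sq_nonneg (M 0 1), sq_nonneg (M 1 0)]

private lemma s4_dev_le (M : Mat) : frobSq (dev M) ≤ frobSq M := by
  rw [s4_frobSq_dev]; nlinarith [sq_nonneg (mtrace M)]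

private lemma s4_volP_le (M : Mat) : frobSq (volP M) ≤ frobSq M := by
  rw [s4_frobSq_volP]
  have h1 := s4_maxsq (mtrace M)
  have h2 := s4_mtrace_sq M
  linarith

private lemma s4_volM_le (M : Mat) : frobSq (volM M) ≤ frobSq M := by
  rw [s4_frobSq_volM]
  have h1 := s4_maxsq (-(mtrace M))
  have h2 := s4_mtrace_sq M
  rw [neg_pow] at h1
  nlinarith

private lemma s4_dev_sub (M N : Mat) :
    (fun i j => dev M i j - dev N i j) = dev (fun i j => M i j - N i j) := by
  funext i j
  simp [dev, mtrace]; ring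

private lemma s4_dev_diff_le (M N : Mat) :
    frobSq (fun i j => dev M i j - dev N i j) ≤ frobSq (fun i j => M i j - N i j) := by
  rw [s4_dev_sub]; exact s4_dev_le _

private lemma s4_max_sq_le (t r : ℝ) : (max t 0 - max r 0)^2 ≤ (t - r)^2 := by
  have h := abs_max_sub_max_le_abs t r 0
  calc (max t 0 - max r 0)^2 = |max t 0 - max r 0|^2 := (sq_abs _).symm
  _ ≤ |t - r|^2 := by exact pow_le_pow_left₀ (abs_nonneg _) h 2
  _ = (t - r)^2 := sq_abs _

private lemma s4_volP_diff_le (M N : Mat) :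
    frobSq (fun i j => volP M i j - volP N i j) ≤ frobSq (fun i j => M i j - N i j) := by
  have he : frobSq (fun i j => volP M i j - volP N i j)
      = (max (mtrace M) 0 - max (mtrace N) 0)^2/2 := by
    rw [s4_frobSq_expand]
    simp [volP, idm]; ring
  have htr : mtrace (fun i j => M i j - N i j) = mtrace M - mtrace N := by
    simp [mtrace]; ring
  have h1 := s4_max_sq_le (mtrace M) (mtrace N)
  have h2 := s4_mtrace_sq (fun i j => M i j - N i j)
  rw [htr] at h2
  rw [he]
  linarith

private lemma s4_key (μ κ : ℝ) (hμ : 0 < μ) (hκ : 0 < κ) (M N : Mat) (a b : ℝ)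
    (ha0 : 0 ≤ a) (ha1 : a ≤ 1) (hb0 : 0 ≤ b) (hb1 : b ≤ 1) :
    (b^2 - a^2) * ((μ * frobSq (dev M) + κ * frobSq (volP M))
        - (μ * frobSq (dev N) + κ * frobSq (volP N)))
      ≤ (a - b)^2 * ((μ * frobSq (dev M) + κ * frobSq (volP M))
          + (μ * frobSq (dev N) + κ * frobSq (volP N))) / 2
        + 4*(μ+κ) * frobSq (fun i j => M i j - N i j) := by
  have hs : (a+b)^2 ≤ 4 := by nlinarith
  have hQ : 0 ≤ frobSq (fun i j => M i j - N i j) := s4_frobSq_nonneg _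
  have hIμ :
      frobSq (dev M) - frobSq (dev N)
        = matInner (fun i j => dev M i j + dev N i j) (fun i j => dev M i j - dev N i j) :=
    s4_sq_diff _ _
  have hCSμ : (matInner (fun i j => dev M i j + dev N i j)
      (fun i j => dev M i j - dev N i j))^2
      ≤ 2*(frobSq (dev M) + frobSq (dev N)) * frobSq (fun i j => M i j - N i j) := by
    calc (matInner (fun i j => dev M i j + dev N i j) (fun i j => dev M i j - dev N i j))^2
        ≤ frobSq (fun i j => dev M i j + dev N i j)
            * frobSq (fun i j => dev M i j - dev N i j) := s4_CS _ _
    _ ≤ (2*frobSq (dev M) + 2*frobSq (dev N)) * frobSq (fun i j => M i j - N i j) := by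
        apply mul_le_mul (s4_sq_add _ _) (s4_dev_diff_le _ _) (s4_frobSq_nonneg _)
        nlinarith [s4_frobSq_nonneg (dev M), s4_frobSq_nonneg (dev N)]
    _ = 2*(frobSq (dev M) + frobSq (dev N)) * frobSq (fun i j => M i j - N i j) := by ring
  have hYμ := s4_young (a-b) (a+b)
      (matInner (fun i j => dev M i j + dev N i j) (fun i j => dev M i j - dev N i j))
      (frobSq (dev M) + frobSq (dev N)) (frobSq (fun i j => M i j - N i j))
      (by nlinarith [s4_frobSq_nonneg (dev M), s4_frobSq_nonneg (dev N)]) hQ hs hCSμ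
  have hIκ :
      frobSq (volP M) - frobSq (volP N)
        = matInner (fun i j => volP M i j + volP N i j) (fun i j => volP M i j - volP N i j) :=
    s4_sq_diff _ _
  have hCSκ : (matInner (fun i j => volP M i j + volP N i j)
      (fun i j => volP M i j - volP N i j))^2
      ≤ 2*(frobSq (volP M) + frobSq (volP N)) * frobSq (fun i j => M i j - N i j) := by
    calc (matInner (fun i j => volP M i j + volP N i j) (fun i j => volP M i j - volP N i j))^2
        ≤ frobSq (fun i j => volP M i j + volP N i j)
            * frobSq (fun i j => volP M i j - volP N i j) := s4_CS _ _
    _ ≤ (2*frobSq (volP M) + 2*frobSq (volP N)) * frobSq (fun i j => M i j - N i j) := by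
        apply mul_le_mul (s4_sq_add _ _) (s4_volP_diff_le _ _) (s4_frobSq_nonneg _)
        nlinarith [s4_frobSq_nonneg (volP M), s4_frobSq_nonneg (volP N)]
    _ = 2*(frobSq (volP M) + frobSq (volP N)) * frobSq (fun i j => M i j - N i j) := by ring
  have hYκ := s4_young (a-b) (a+b)
      (matInner (fun i j => volP M i j + volP N i j) (fun i j => volP M i j - volP N i j))
      (frobSq (volP M) + frobSq (volP N)) (frobSq (fun i j => M i j - N i j))
      (by nlinarith [s4_frobSq_nonneg (volP M), s4_frobSq_nonneg (volP N)]) hQ hs hCSκ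
  have hexp : (b^2 - a^2) * ((μ * frobSq (dev M) + κ * frobSq (volP M))
        - (μ * frobSq (dev N) + κ * frobSq (volP N)))
      = μ * (-((a-b)*(a+b)*(matInner (fun i j => dev M i j + dev N i j)
            (fun i j => dev M i j - dev N i j))))
        + κ * (-((a-b)*(a+b)*(matInner (fun i j => volP M i j + volP N i j)
            (fun i j => volP M i j - volP N i j)))) := by
    rw [← hIμ, ← hIκ]; ring
  rw [hexp]
  have t1 := mul_le_mul_of_nonneg_left hYμ hμ.le
  have t2 := mul_le_mul_of_nonneg_left hYκ hκ.le
  nlinarith [t1, t2]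

end Stmt4Aux
section Stmt4AuxB

open MeasureTheory

/-! ### The truncation function φ -/

private noncomputable def s4phi (t : ℝ) : ℝ := t * Real.exp (min t 0)
private noncomputable def s4phid (t : ℝ) : ℝ := (1 + min t 0) * Real.exp (min t 0)

private lemma s4_phi_hasDeriv : ∀ t, HasDerivAt s4phi (s4phid t) t := by
  intro t
  rcases lt_trichotomy t 0 with h | h | h
  · have he : (fun s => s * Real.exp s) =ᶠ[nhds t] s4phi := by
      filter_upwards [Iio_mem_nhds h] with s hs
      have hs' : s < 0 := hs
      simp [s4phi, min_eq_left hs'.le]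
    have h1 : HasDerivAt (fun s => s * Real.exp s) ((1+t) * Real.exp t) t := by
      have := (hasDerivAt_id' t).mul (Real.hasDerivAt_exp t)
      exact this.congr_deriv (by ring)
    have := h1.congr_of_eventuallyEq he.symm
    simpa [s4phid, min_eq_left h.le] using this
  · subst h
    rw [hasDerivAt_iff_tendsto_slope]
    have he : (fun s => Real.exp (min s 0)) =ᶠ[nhdsWithin (0:ℝ) {(0:ℝ)}ᶜ] slope s4phi 0 := by
      filter_upwards [self_mem_nhdsWithin] with s hs
      have hs' : s ≠ 0 := hs
      simp only [slope, s4phi, vsub_eq_sub, smul_eq_mul, sub_zero, zero_mul]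
      rw [← mul_assoc, inv_mul_cancel₀ hs', one_mul]
    have hc : Filter.Tendsto (fun s => Real.exp (min s 0)) (nhdsWithin (0:ℝ) {(0:ℝ)}ᶜ)
        (nhds (1:ℝ)) := by
      have hcont : Continuous (fun s : ℝ => Real.exp (min s 0)) :=
        Real.continuous_exp.comp (continuous_id.min continuous_const)
      simpa using (hcont.tendsto 0).mono_left nhdsWithin_le_nhds
    have := hc.congr' he
    simpa [s4phid] using this
  · have he : (fun s : ℝ => s) =ᶠ[nhds t] s4phi := by
      filter_upwards [Ioi_mem_nhds h] with s hs
      have hs' : (0:ℝ) < s := hs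
      simp [s4phi, min_eq_right hs'.le]
    have := (hasDerivAt_id t).congr_of_eventuallyEq he.symm
    simpa [s4phid, min_eq_right h.le] using this

private lemma s4_phi_cont : Continuous s4phi :=
  continuous_id.mul (Real.continuous_exp.comp (continuous_id.min continuous_const))

private lemma s4_phi_abs (t : ℝ) : |s4phi t| ≤ |t| := by
  have h1 : Real.exp (min t 0) ≤ 1 := Real.exp_le_one_iff.2 (min_le_right t 0)
  have h2 : 0 < Real.exp (min t 0) := Real.exp_pos _
  rw [s4phi, abs_mul, abs_of_pos h2]
  nlinarith [abs_nonneg t]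

private lemma s4_phi_sq (t : ℝ) : (s4phi t)^2 ≤ t^2 := by
  have := s4_phi_abs t
  calc (s4phi t)^2 = |s4phi t|^2 := (sq_abs _).symm
  _ ≤ |t|^2 := by exact pow_le_pow_left₀ (abs_nonneg _) this 2
  _ = t^2 := sq_abs _

private lemma s4_phid_abs (t : ℝ) : |s4phid t| ≤ 1 := by
  set m := min t 0 with hm
  have hm0 : m ≤ 0 := min_le_right t 0
  have he1 : Real.exp m ≤ 1 := Real.exp_le_one_iff.2 hm0
  have he0 : 0 < Real.exp m := Real.exp_pos m
  rw [s4phid, abs_mul, abs_of_pos he0]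
  rcases le_total (-1) m with h | h
  · have : |1 + m| = 1 + m := abs_of_nonneg (by linarith)
    rw [this]; nlinarith
  · have : |1 + m| = -(1+m) := abs_of_nonpos (by linarith)
    rw [this]
    have key : (1 - m) * Real.exp m ≤ 1 := by
      have h3 : 1 - m ≤ Real.exp (-m) := by
        have := Real.add_one_le_exp (-m); linarith
      have h4 : (1 - m) * Real.exp m ≤ Real.exp (-m) * Real.exp m :=
        mul_le_mul_of_nonneg_right h3 he0.le
      rwa [← Real.exp_add, neg_add_cancel, Real.exp_zero] at h4
    nlinarith

private lemma s4_phi_nonneg_eq {t : ℝ} (h : 0 ≤ t) : s4phi t = t := by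
  simp [s4phi, min_eq_right h]

private lemma s4_phi_neg {t : ℝ} (h : t < 0) : t < s4phi t ∧ s4phi t < 0 := by
  have hmin : min t 0 = t := min_eq_left h.le
  have h1 : Real.exp t < 1 := Real.exp_lt_one_iff.2 h
  have h2 : 0 < Real.exp t := Real.exp_pos t
  constructor
  · rw [s4phi, hmin]; nlinarith
  · rw [s4phi, hmin]; nlinarith

private lemma s4_phi_one (t : ℝ) : (s4phi t - 1)^2 ≤ (t - 1)^2 := by
  rcases lt_or_ge t 0 with h | h
  · obtain ⟨h1, h2⟩ := s4_phi_neg h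
    nlinarith
  · rw [s4_phi_nonneg_eq h]

private lemma s4_phi_one_strict {t : ℝ} (h : t < 0) : (s4phi t - 1)^2 < (t - 1)^2 := by
  obtain ⟨h1, h2⟩ := s4_phi_neg h
  nlinarith

/-! ### Measurability -/

private lemma s4_norm_grad (f : Pt → ℝ) (x : Pt) : ‖gradient f x‖ = ‖fderiv ℝ f x‖ := by
  rw [gradient]
  exact LinearIsometryEquiv.norm_map _ _

private lemma s4_meas_entry (u : Pt → Pt) (i j : Fin 2) :
    Measurable fun x => symGrad u x i j := by
  have h : ∀ (l k : Fin 2), Measurable fun x => fderiv ℝ u x (EuclideanSpace.single l 1) k :=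
    fun l k =>
      ((EuclideanSpace.proj k).continuous.comp
        (ContinuousLinearMap.apply ℝ Pt (EuclideanSpace.single l 1)).continuous).measurable.comp
        (measurable_fderiv ℝ u)
  exact ((h j i).add (h i j)).div_const 2

private lemma s4_meas_trace (u : Pt → Pt) : Measurable fun x => mtrace (symGrad u x) :=
  (s4_meas_entry u 0 0).add (s4_meas_entry u 1 1)

private lemma s4_meas_frobSq (u : Pt → Pt) : Measurable fun x => frobSq (symGrad u x) := by
  have h : (fun x => frobSq (symGrad u x)) = fun x =>
      (symGrad u x 0 0)^2 + (symGrad u x 0 1)^2 + (symGrad u x 1 0)^2 + (symGrad u x 1 1)^2 :=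
    funext fun x => s4_frobSq_expand _
  rw [h]
  exact ((((s4_meas_entry u 0 0).pow_const 2).add ((s4_meas_entry u 0 1).pow_const 2)).add
    ((s4_meas_entry u 1 0).pow_const 2)).add ((s4_meas_entry u 1 1).pow_const 2)

private lemma s4_meas_A (S : PFSetting) (u : Pt → Pt) :
    Measurable fun x => S.Wplus 0 (symGrad u x) := by
  have h : (fun x => S.Wplus 0 (symGrad u x)) = fun x =>
      S.μ * (frobSq (symGrad u x) - (mtrace (symGrad u x))^2/2)
        + S.κ * ((max (mtrace (symGrad u x)) 0)^2/2) := by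
    funext x
    rw [PFSetting.Wplus, s4_frobSq_dev, s4_frobSq_volP]
    ring
  rw [h]
  exact (((s4_meas_frobSq u).sub (((s4_meas_trace u).pow_const 2).div_const 2)).const_mul
    S.μ).add (((((s4_meas_trace u).max measurable_const).pow_const 2).div_const 2).const_mul S.κ)

private lemma s4_meas_B (S : PFSetting) (u : Pt → Pt) :
    Measurable fun x => S.Wminus (symGrad u x) := by
  have h : (fun x => S.Wminus (symGrad u x)) = fun x =>
      S.κ * ((max (-(mtrace (symGrad u x))) 0)^2/2) := by
    funext x
    rw [PFSetting.Wminus, s4_frobSq_volM]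
  rw [h]
  exact ((((s4_meas_trace u).neg.max measurable_const).pow_const 2).div_const 2).const_mul S.κ

private lemma s4_meas_gradnorm (f : Pt → ℝ) : Measurable fun x => ‖gradient f x‖ := by
  have h : (fun x => ‖gradient f x‖) = fun x => ‖fderiv ℝ f x‖ :=
    funext fun x => s4_norm_grad f x
  rw [h]
  exact (measurable_fderiv ℝ f).norm

/-! ### Pointwise bounds for symGrad -/

private lemma s4_coord_abs_le (v : Pt) (i : Fin 2) : |v i| ≤ ‖v‖ := by
  rw [← Real.sqrt_sq_eq_abs, EuclideanSpace.norm_eq]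
  apply Real.sqrt_le_sqrt
  have he : (v i)^2 = ‖v i‖^2 := by simp [Real.norm_eq_abs, sq_abs]
  rw [he]
  exact Finset.single_le_sum (f := fun j => ‖v j‖^2) (fun j _ => sq_nonneg _) (Finset.mem_univ i)

private lemma s4_sg_entry_bound (u : Pt → Pt) (x : Pt) (i j : Fin 2) :
    |symGrad u x i j| ≤ ‖fderiv ℝ u x‖ := by
  have h : ∀ (l k : Fin 2), |fderiv ℝ u x (EuclideanSpace.single l 1) k| ≤ ‖fderiv ℝ u x‖ := by
    intro l k
    calc |fderiv ℝ u x (EuclideanSpace.single l 1) k|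
        ≤ ‖fderiv ℝ u x (EuclideanSpace.single l 1)‖ := s4_coord_abs_le _ _
    _ ≤ ‖fderiv ℝ u x‖ * ‖EuclideanSpace.single l (1:ℝ)‖ :=
        (fderiv ℝ u x).le_opNorm _
    _ = ‖fderiv ℝ u x‖ := by rw [EuclideanSpace.norm_single]; simp
  have h1 := h j i
  have h2 := h i j
  have := abs_add_le (fderiv ℝ u x (EuclideanSpace.single j 1) i)
    (fderiv ℝ u x (EuclideanSpace.single i 1) j)
  rw [show symGrad u x i j = (fderiv ℝ u x (EuclideanSpace.single j 1) i
    + fderiv ℝ u x (EuclideanSpace.single i 1) j)/2 from rfl, abs_div]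
  simp only [Nat.abs_ofNat]
  linarith

private lemma s4_frobSq_sg_le (u : Pt → Pt) (x : Pt) :
    frobSq (symGrad u x) ≤ 4 * ‖fderiv ℝ u x‖^2 := by
  rw [s4_frobSq_expand]
  have h : ∀ (i j : Fin 2), (symGrad u x i j)^2 ≤ ‖fderiv ℝ u x‖^2 := by
    intro i j
    calc (symGrad u x i j)^2 = |symGrad u x i j|^2 := (sq_abs _).symm
    _ ≤ ‖fderiv ℝ u x‖^2 := pow_le_pow_left₀ (abs_nonneg _) (s4_sg_entry_bound u x i j) 2
  have h1 := h 0 0; have h2 := h 0 1; have h3 := h 1 0; have h4 := h 1 1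
  linarith

private lemma s4_A_nonneg (S : PFSetting) (M : Mat) : 0 ≤ S.Wplus 0 M := by
  rw [PFSetting.Wplus]
  have := s4_frobSq_nonneg (dev M); have := s4_frobSq_nonneg (volP M)
  have := S.hμ; have := S.hκ
  positivity

private lemma s4_B_nonneg (S : PFSetting) (M : Mat) : 0 ≤ S.Wminus M := by
  rw [PFSetting.Wminus]
  have := s4_frobSq_nonneg (volM M)
  have := S.hκ
  positivity

private lemma s4_A_le (S : PFSetting) (u : Pt → Pt) (x : Pt) :
    S.Wplus 0 (symGrad u x) ≤ 4*(S.μ + S.κ) * ‖fderiv ℝ u x‖^2 := by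
  rw [PFSetting.Wplus]
  have h1 : frobSq (dev (symGrad u x)) ≤ 4*‖fderiv ℝ u x‖^2 :=
    (s4_dev_le _).trans (s4_frobSq_sg_le u x)
  have h2 : frobSq (volP (symGrad u x)) ≤ 4*‖fderiv ℝ u x‖^2 :=
    (s4_volP_le _).trans (s4_frobSq_sg_le u x)
  nlinarith [S.hμ, S.hκ, s4_frobSq_nonneg (dev (symGrad u x)),
    s4_frobSq_nonneg (volP (symGrad u x))]

private lemma s4_B_le (S : PFSetting) (u : Pt → Pt) (x : Pt) :
    S.Wminus (symGrad u x) ≤ 4*(S.μ + S.κ) * ‖fderiv ℝ u x‖^2 := by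
  rw [PFSetting.Wminus]
  have h2 : frobSq (volM (symGrad u x)) ≤ 4*‖fderiv ℝ u x‖^2 :=
    (s4_volM_le _).trans (s4_frobSq_sg_le u x)
  nlinarith [S.hμ, S.hκ, s4_frobSq_nonneg (volM (symGrad u x)), sq_nonneg ‖fderiv ℝ u x‖]

end Stmt4AuxB
section Stmt4AuxC

open MeasureTheory

private lemma s4_finite (S : PFSetting) : IsFiniteMeasure (volume.restrict S.Ω) :=
  ⟨by rw [Measure.restrict_apply_univ]; exact S.hΩbdd.measure_lt_top⟩

private lemma s4_two_le {p : ℝ} (hp : 2 < p) : (2 : ENNReal) ≤ ENNReal.ofReal p := by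
  rw [show (2:ENNReal) = ENNReal.ofReal 2 by simp]
  exact ENNReal.ofReal_le_ofReal hp.le

private lemma s4_int_Du_sq (S : PFSetting) {p : ℝ} (hp : 2 < p) {u : Pt → Pt}
    (hu : S.MemW1p p u) :
    Integrable (fun x => ‖fderiv ℝ u x‖^2) (volume.restrict S.Ω) := by
  haveI := s4_finite S
  exact (hu.2.2.mono_exponent (s4_two_le hp)).integrable_sq

private lemma s4_int_u_sq (S : PFSetting) {p : ℝ} (hp : 2 < p) {u : Pt → Pt}
    (hu : S.MemW1p p u) :
    Integrable (fun x => ‖u x‖^2) (volume.restrict S.Ω) := by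
  haveI := s4_finite S
  exact (hu.2.1.norm.mono_exponent (s4_two_le hp)).integrable_sq

private lemma s4_int_A (S : PFSetting) {p : ℝ} (hp : 2 < p) {u : Pt → Pt} (hu : S.MemW1p p u) :
    Integrable (fun x => S.Wplus 0 (symGrad u x)) (volume.restrict S.Ω) := by
  apply Integrable.mono' ((s4_int_Du_sq S hp hu).const_mul (4*(S.μ+S.κ)))
    (s4_meas_A S u).aestronglyMeasurable
  filter_upwards with x
  rw [Real.norm_eq_abs, abs_of_nonneg (s4_A_nonneg S _)]
  exact s4_A_le S u x

private lemma s4_int_B (S : PFSetting) {p : ℝ} (hp : 2 < p) {u : Pt → Pt} (hu : S.MemW1p p u) :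
    Integrable (fun x => S.Wminus (symGrad u x)) (volume.restrict S.Ω) := by
  apply Integrable.mono' ((s4_int_Du_sq S hp hu).const_mul (4*(S.μ+S.κ)))
    (s4_meas_B S u).aestronglyMeasurable
  filter_upwards with x
  rw [Real.norm_eq_abs, abs_of_nonneg (s4_B_nonneg S _)]
  exact s4_B_le S u x

private lemma s4_Wd_expand (S : PFSetting) (M : Mat) (t : ℝ) :
    S.Wd 0 M t = (t^2 + S.η) * S.Wplus 0 M + S.Wminus M := rfl

private lemma s4_int_Wd (S : PFSetting) {p : ℝ} (hp : 2 < p) {u : Pt → Pt} (hu : S.MemW1p p u)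
    {v : Pt → ℝ} (hv : S.MemV v) :
    Integrable (fun x => S.Wd 0 (symGrad u x) (v x)) (volume.restrict S.Ω) := by
  obtain ⟨Cv, hCv⟩ := hv.2
  have hA := s4_int_A S hp hu
  have hB := s4_int_B S hp hu
  have haesm : AEStronglyMeasurable (fun x => S.Wd 0 (symGrad u x) (v x))
      (volume.restrict S.Ω) := by
    have hv' : AEStronglyMeasurable v (volume.restrict S.Ω) := hv.1.2.1.1
    have hrw : (fun x => S.Wd 0 (symGrad u x) (v x)) = fun x =>
        (v x * v x + S.η) * S.Wplus 0 (symGrad u x) + S.Wminus (symGrad u x) := by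
      funext x; rw [s4_Wd_expand, pow_two]
    rw [hrw]
    exact (((hv'.mul hv').add aestronglyMeasurable_const).mul
      (s4_meas_A S u).aestronglyMeasurable).add (s4_meas_B S u).aestronglyMeasurable
  apply Integrable.mono' ((hA.const_mul (Cv^2 + S.η)).add hB) haesm
  rw [ae_restrict_iff' S.hΩopen.measurableSet]
  filter_upwards with x hx
  have h1 : 0 ≤ S.Wplus 0 (symGrad u x) := s4_A_nonneg S _
  have h2 : 0 ≤ S.Wminus (symGrad u x) := s4_B_nonneg S _
  have h3 : |v x| ≤ Cv := hCv x hx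
  have h5 : (v x)^2 ≤ Cv^2 := by nlinarith [abs_nonneg (v x), sq_abs (v x)]
  have h6 : 0 ≤ S.Wd 0 (symGrad u x) (v x) := by
    rw [s4_Wd_expand]
    have := mul_nonneg (by nlinarith [sq_nonneg (v x), S.hη] : (0:ℝ) ≤ (v x)^2 + S.η) h1
    linarith
  rw [Real.norm_eq_abs, abs_of_nonneg h6, s4_Wd_expand]
  simp only [Pi.add_apply]
  nlinarith [S.hη, mul_le_mul_of_nonneg_right
    (by linarith : (v x)^2 + S.η ≤ Cv^2 + S.η) h1]

private lemma s4_int_lp (S : PFSetting) {v : Pt → ℝ} (hv : S.MemV v) :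
    Integrable (fun x => (v x - 1)^2 + ‖gradient v x‖^2) (volume.restrict S.Ω) := by
  haveI := s4_finite S
  have h1 : MemLp (fun x => v x - 1) 2 (volume.restrict S.Ω) :=
    hv.1.2.1.sub (memLp_const 1)
  exact h1.integrable_sq.add hv.1.2.2.integrable_sq

private lemma s4_F_split (S : PFSetting) (u : Pt → Pt) (v : Pt → ℝ) :
    S.F 0 u v = (∫ x in S.Ω, S.Wd 0 (symGrad u x) (v x))
      + (S.Gc/2) * ∫ x in S.Ω, ((v x - 1)^2 + ‖gradient v x‖^2) := by
  rw [PFSetting.F, PFSetting.E, PFSetting.L]; ring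

private lemma s4_F_repr (S : PFSetting) (u : Pt → Pt) (v : Pt → ℝ)
    (hWd : Integrable (fun x => S.Wd 0 (symGrad u x) (v x)) (volume.restrict S.Ω))
    (hlp : Integrable (fun x => (v x - 1)^2 + ‖gradient v x‖^2) (volume.restrict S.Ω)) :
    S.F 0 u v = ∫ x in S.Ω,
      (S.Wd 0 (symGrad u x) (v x) + (S.Gc/2) * ((v x - 1)^2 + ‖gradient v x‖^2)) := by
  rw [s4_F_split, ← integral_const_mul, ← integral_add hWd (hlp.const_mul _)]

private lemma s4_memV_mid (S : PFSetting) {v₁ v₂ : Pt → ℝ} (h1 : S.MemV v₁) (h2 : S.MemV v₂) :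
    S.MemV (fun x => (1/2 : ℝ) * (v₁ x + v₂ x)) := by
  obtain ⟨C1, hC1⟩ := h1.2
  obtain ⟨C2, hC2⟩ := h2.2
  refine ⟨⟨?_, ?_, ?_⟩, (C1+C2)/2, ?_⟩
  · intro x hx; exact ((h1.1.1 x hx).add (h2.1.1 x hx)).const_mul _
  · exact (h1.1.2.1.add h2.1.2.1).const_mul (1/2)
  · apply MemLp.of_le (h1.1.2.2.add h2.1.2.2) (s4_meas_gradnorm _).aestronglyMeasurable
    rw [ae_restrict_iff' S.hΩopen.measurableSet]
    filter_upwards with x hx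
    have hfd : fderiv ℝ (fun y => (1/2:ℝ) * (v₁ y + v₂ y)) x
        = (1/2 : ℝ) • (fderiv ℝ v₁ x + fderiv ℝ v₂ x) :=
      (((h1.1.1 x hx).hasFDerivAt.add (h2.1.1 x hx).hasFDerivAt).const_mul (1/2:ℝ)).fderiv
    have hb : ‖gradient (fun y => (1/2:ℝ) * (v₁ y + v₂ y)) x‖
        ≤ ‖gradient v₁ x‖ + ‖gradient v₂ x‖ := by
      rw [s4_norm_grad, hfd, norm_smul, s4_norm_grad, s4_norm_grad]
      have := norm_add_le (fderiv ℝ v₁ x) (fderiv ℝ v₂ x)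
      have hn : ‖(1/2:ℝ)‖ = 1/2 := by rw [Real.norm_eq_abs]; norm_num
      rw [hn]
      nlinarith [norm_nonneg (fderiv ℝ v₁ x), norm_nonneg (fderiv ℝ v₂ x)]
    have hnn : (0:ℝ) ≤ ‖gradient v₁ x‖ + ‖gradient v₂ x‖ := by positivity
    calc ‖‖gradient (fun y => (1/2:ℝ) * (v₁ y + v₂ y)) x‖‖
        = ‖gradient (fun y => (1/2:ℝ) * (v₁ y + v₂ y)) x‖ := norm_norm _
    _ ≤ ‖gradient v₁ x‖ + ‖gradient v₂ x‖ := hb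
    _ = ‖((fun x => ‖gradient v₁ x‖) + fun x => ‖gradient v₂ x‖) x‖ := by
        rw [Pi.add_apply, Real.norm_eq_abs, abs_of_nonneg hnn]
  · intro x hx
    have a1 := hC1 x hx; have a2 := hC2 x hx
    have := abs_add_le (v₁ x) (v₂ x)
    rw [abs_mul]
    have hn : |(1/2:ℝ)| = 1/2 := by norm_num
    rw [hn]
    linarith [abs_nonneg (v₁ x + v₂ x)]

private lemma s4_vmin_nonneg (S : PFSetting) {p : ℝ} (hp : 2 < p) {u : Pt → Pt}
    (hu : S.MemW1p p u) {v₀ v : Pt → ℝ} (hv₀ : ∀ x ∈ S.Ω, 0 ≤ v₀ x)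
    (hmin : S.IsVMin 0 u v₀ v) :
    ∀ᵐ x ∂(volume.restrict S.Ω), 0 ≤ v x := by
  obtain ⟨hvV, hvle, hopt⟩ := hmin
  have hdiff := hvV.1.1
  have hL2 := hvV.1.2.1
  have hG2 := hvV.1.2.2
  obtain ⟨Cv, hCv⟩ := hvV.2
  set w := fun x => s4phi (v x) with hw
  have hdw : ∀ x ∈ S.Ω, HasFDerivAt w (s4phid (v x) • fderiv ℝ v x) x := fun x hx =>
    (s4_phi_hasDeriv (v x)).comp_hasFDerivAt x (hdiff x hx).hasFDerivAt
  have hgw : ∀ x ∈ S.Ω, ‖gradient w x‖ ≤ ‖gradient v x‖ := by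
    intro x hx
    rw [s4_norm_grad, s4_norm_grad, (hdw x hx).fderiv, norm_smul]
    have h1 := s4_phid_abs (v x)
    have h2 : ‖s4phid (v x)‖ = |s4phid (v x)| := rfl
    nlinarith [norm_nonneg (fderiv ℝ v x), abs_nonneg (s4phid (v x))]
  have hwV : S.MemV w := by
    refine ⟨⟨fun x hx => (hdw x hx).differentiableAt, ?_, ?_⟩, Cv, ?_⟩
    · apply MemLp.of_le hL2 (s4_phi_cont.comp_aestronglyMeasurable hL2.1)
      filter_upwards with x
      simpa [Real.norm_eq_abs] using s4_phi_abs (v x)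
    · apply MemLp.of_le hG2 (s4_meas_gradnorm w).aestronglyMeasurable
      rw [ae_restrict_iff' S.hΩopen.measurableSet]
      filter_upwards with x hx
      simpa [Real.norm_eq_abs, abs_of_nonneg (norm_nonneg _)] using hgw x hx
    · intro x hx
      exact (s4_phi_abs (v x)).trans (hCv x hx)
  have hwle : ∀ x ∈ S.Ω, w x ≤ v₀ x := by
    intro x hx
    rcases lt_or_ge (v x) 0 with h | h
    · exact (s4_phi_neg h).2.le.trans (hv₀ x hx)
    · show s4phi (v x) ≤ v₀ x
      rw [s4_phi_nonneg_eq h]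
      exact hvle x hx
  have hF := hopt w hwV hwle
  have hvV' : S.MemV v := ⟨⟨hdiff, hL2, hG2⟩, Cv, hCv⟩
  have hWdv := s4_int_Wd S hp hu hvV'
  have hWdw := s4_int_Wd S hp hu hwV
  have hlpv := s4_int_lp S hvV'
  have hlpw := s4_int_lp S hwV
  rw [s4_F_repr S u v hWdv hlpv, s4_F_repr S u w hWdw hlpw] at hF
  set gv := fun x => S.Wd 0 (symGrad u x) (v x)
    + (S.Gc/2) * ((v x - 1)^2 + ‖gradient v x‖^2) with hgv
  set gw := fun x => S.Wd 0 (symGrad u x) (w x)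
    + (S.Gc/2) * ((w x - 1)^2 + ‖gradient w x‖^2) with hgw2
  have hIv : Integrable gv (volume.restrict S.Ω) := hWdv.add (hlpv.const_mul _)
  have hIw : Integrable gw (volume.restrict S.Ω) := hWdw.add (hlpw.const_mul _)
  have haepos : ∀ᵐ x ∂(volume.restrict S.Ω), 0 ≤ gv x - gw x := by
    rw [ae_restrict_iff' S.hΩopen.measurableSet]
    filter_upwards with x hx
    have hA := s4_A_nonneg S (symGrad u x)
    have hB : (0:ℝ) ≤ S.Wminus (symGrad u x) := s4_B_nonneg S _
    have h1 : (w x)^2 ≤ (v x)^2 := s4_phi_sq (v x)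
    have h2 : ‖gradient w x‖^2 ≤ ‖gradient v x‖^2 := by
      have := hgw x hx
      nlinarith [norm_nonneg (gradient w x), norm_nonneg (gradient v x)]
    have h3 : (w x - 1)^2 ≤ (v x - 1)^2 := s4_phi_one (v x)
    simp only [hgv, hgw2, s4_Wd_expand]
    nlinarith [S.hGc, mul_nonneg (sub_nonneg.mpr h1) hA]
  have hint0 : ∫ x in S.Ω, (gv x - gw x) = 0 := by
    rw [integral_sub hIv hIw]
    have h2 : ∫ x in S.Ω, gw x ≤ ∫ x in S.Ω, gv x :=
      integral_mono_ae hIw hIv (by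
        filter_upwards [haepos] with x hx
        simpa using hx)
    linarith
  have hae0 : (fun x => gv x - gw x) =ᶠ[ae (volume.restrict S.Ω)] 0 :=
    (integral_eq_zero_iff_of_nonneg_ae haepos (hIv.sub hIw)).1 hint0
  filter_upwards [hae0, self_mem_ae_restrict S.hΩopen.measurableSet] with x hDx hxΩ
  by_contra hneg
  push_neg at hneg
  have hA := s4_A_nonneg S (symGrad u x)
  have hB : (0:ℝ) ≤ S.Wminus (symGrad u x) := s4_B_nonneg S _
  have h1 : (w x)^2 ≤ (v x)^2 := s4_phi_sq (v x)
  have h2 : ‖gradient w x‖^2 ≤ ‖gradient v x‖^2 := by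
    have := hgw x hxΩ
    nlinarith [norm_nonneg (gradient w x), norm_nonneg (gradient v x)]
  have h3 : (w x - 1)^2 < (v x - 1)^2 := s4_phi_one_strict hneg
  have hpos : 0 < gv x - gw x := by
    simp only [hgv, hgw2, s4_Wd_expand]
    nlinarith [S.hGc, mul_nonneg (sub_nonneg.mpr h1) hA]
  have : gv x - gw x = 0 := hDx
  linarith

end Stmt4AuxC
section Stmt4AuxD

open MeasureTheory

private lemma s4_sg_sub (u₁ u₂ : Pt → Pt) (x : Pt) (h1 : DifferentiableAt ℝ u₁ x)
    (h2 : DifferentiableAt ℝ u₂ x) :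
    (fun i j => symGrad u₁ x i j - symGrad u₂ x i j) = symGrad (u₁ - u₂) x := by
  funext i j
  have hf : fderiv ℝ (u₁ - u₂) x = fderiv ℝ u₁ x - fderiv ℝ u₂ x := fderiv_sub h1 h2
  show (fderiv ℝ u₁ x (EuclideanSpace.single j 1) i
      + fderiv ℝ u₁ x (EuclideanSpace.single i 1) j)/2
    - (fderiv ℝ u₂ x (EuclideanSpace.single j 1) i
      + fderiv ℝ u₂ x (EuclideanSpace.single i 1) j)/2
    = (fderiv ℝ (u₁ - u₂) x (EuclideanSpace.single j 1) i
      + fderiv ℝ (u₁ - u₂) x (EuclideanSpace.single i 1) j)/2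
  rw [hf]
  simp [ContinuousLinearMap.sub_apply]
  ring

private lemma s4_grad_identity {v₁ v₂ : Pt → ℝ} {x : Pt}
    (h1 : DifferentiableAt ℝ v₁ x) (h2 : DifferentiableAt ℝ v₂ x) :
    ‖gradient v₁ x‖^2 + ‖gradient v₂ x‖^2
      - 2*‖gradient (fun y => (1/2:ℝ)*(v₁ y + v₂ y)) x‖^2
    = (1/2) * ‖gradient (v₁ - v₂) x‖^2 := by
  have hfm : fderiv ℝ (fun y => (1/2:ℝ)*(v₁ y + v₂ y)) x
      = (1/2:ℝ) • (fderiv ℝ v₁ x + fderiv ℝ v₂ x) :=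
    ((h1.hasFDerivAt.add h2.hasFDerivAt).const_mul (1/2:ℝ)).fderiv
  have hfs : fderiv ℝ (v₁ - v₂) x = fderiv ℝ v₁ x - fderiv ℝ v₂ x := fderiv_sub h1 h2
  have hgm : gradient (fun y => (1/2:ℝ)*(v₁ y + v₂ y)) x
      = (1/2:ℝ) • (gradient v₁ x + gradient v₂ x) := by
    rw [gradient, gradient, gradient, hfm]
    rw [LinearIsometryEquiv.map_smul, LinearIsometryEquiv.map_add]
  have hgs : gradient (v₁ - v₂) x = gradient v₁ x - gradient v₂ x := by
    rw [gradient, gradient, gradient, hfs, map_sub]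
  rw [hgm, hgs, norm_smul]
  have hp := parallelogram_law_with_norm ℝ (gradient v₁ x) (gradient v₂ x)
  have hn : ‖(1/2:ℝ)‖ = 1/2 := by rw [Real.norm_eq_abs]; norm_num
  rw [hn]
  nlinarith [hp]

private lemma s4_Wplus_eq (S : PFSetting) (M : Mat) :
    S.Wplus 0 M = S.μ * frobSq (dev M) + S.κ * frobSq (volP M) := by
  rw [PFSetting.Wplus, add_zero]

end Stmt4AuxD
set_option maxHeartbeats 2000000 in

/-- Lemma 3.8 of the paper.  For every `p ∈ (2,q]` and `M > 0` there is
`C > 0` such that: if `u₁, u₂ ∈ W^{1,p}(Ω;ℝ²)` with norms at most `M`, `v₀ ∈ 𝒱` with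
`0 ≤ v₀ ≤ 1`, and `v_i := argmin {ℱ(u_i,v) : v ∈ 𝒱, v ≤ v₀}` for `i = 1,2`, then
`‖v₁ - v₂‖_{H¹} ≤ C ‖u₁ - u₂‖_{H¹}`. -/
theorem stmt4 (S : PFSetting) (p : ℝ) (hp : 2 < p) (hpq : p ≤ S.q) :
    ∀ M > (0 : ℝ), ∃ C > (0 : ℝ),
      ∀ u₁ u₂ : Pt → Pt, S.MemW1p p u₁ → S.MemW1p p u₂ →
        S.W1pNorm p u₁ ≤ M → S.W1pNorm p u₂ ≤ M →
        ∀ v₀ : Pt → ℝ, S.MemV v₀ → (∀ x ∈ S.Ω, 0 ≤ v₀ x ∧ v₀ x ≤ 1) →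
        ∀ v₁ v₂ : Pt → ℝ, S.IsVMin 0 u₁ v₀ v₁ → S.IsVMin 0 u₂ v₀ v₂ →
          S.H1norm (v₁ - v₂) ≤ C * S.H1normV (u₁ - u₂) := by
  intro M hM
  have hK : (0:ℝ) < 32*(S.μ+S.κ)/S.Gc := by
    have h1 := S.hμ; have h2 := S.hκ; have h3 := S.hGc; positivity
  refine ⟨Real.sqrt (32*(S.μ+S.κ)/S.Gc), Real.sqrt_pos.mpr hK, ?_⟩
  intro u₁ u₂ hu₁ hu₂ _ _ v₀ hv₀V hv₀01 v₁ v₂ hmin₁ hmin₂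
  haveI := s4_finite S
  have hΩm : MeasurableSet S.Ω := S.hΩopen.measurableSet
  have hv₁V : S.MemV v₁ := hmin₁.1
  have hv₂V : S.MemV v₂ := hmin₂.1
  have hv₁le := hmin₁.2.1
  have hv₂le := hmin₂.2.1
  have h0v₁ := s4_vmin_nonneg S hp hu₁ (fun x hx => (hv₀01 x hx).1) hmin₁
  have h0v₂ := s4_vmin_nonneg S hp hu₂ (fun x hx => (hv₀01 x hx).1) hmin₂
  set m : Pt → ℝ := fun x => (1/2:ℝ) * (v₁ x + v₂ x) with hmdef
  have hmV : S.MemV m := s4_memV_mid S hv₁V hv₂V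
  have hmle : ∀ x ∈ S.Ω, m x ≤ v₀ x := by
    intro x hx
    have a1 := hv₁le x hx; have a2 := hv₂le x hx
    have a3 := (hv₀01 x hx).1
    simp only [hmdef]; linarith
  have hF1 := hmin₁.2.2 m hmV hmle
  have hF2 := hmin₂.2.2 m hmV hmle
  simp only [s4_F_split] at hF1 hF2
  -- integrability of all pieces
  have hWd11 := s4_int_Wd S hp hu₁ hv₁V
  have hWd12 := s4_int_Wd S hp hu₁ hv₂V
  have hWd1m := s4_int_Wd S hp hu₁ hmV
  have hWd21 := s4_int_Wd S hp hu₂ hv₁V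
  have hWd22 := s4_int_Wd S hp hu₂ hv₂V
  have hWd2m := s4_int_Wd S hp hu₂ hmV
  have hlp1 := s4_int_lp S hv₁V
  have hlp2 := s4_int_lp S hv₂V
  have hlpm := s4_int_lp S hmV
  -- identity A for u₁
  have idA1 : (∫ x in S.Ω, S.Wd 0 (symGrad u₁ x) (v₁ x))
      + (∫ x in S.Ω, S.Wd 0 (symGrad u₁ x) (v₂ x))
      - 2*(∫ x in S.Ω, S.Wd 0 (symGrad u₁ x) (m x))
      = ∫ x in S.Ω, S.Wplus 0 (symGrad u₁ x) * (v₁ x - v₂ x)^2/2 := by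
    have i1 : (∫ x in S.Ω, (S.Wd 0 (symGrad u₁ x) (v₁ x) + S.Wd 0 (symGrad u₁ x) (v₂ x)
          - 2 * S.Wd 0 (symGrad u₁ x) (m x)))
        = (∫ x in S.Ω, (S.Wd 0 (symGrad u₁ x) (v₁ x) + S.Wd 0 (symGrad u₁ x) (v₂ x)))
          - ∫ x in S.Ω, 2 * S.Wd 0 (symGrad u₁ x) (m x) :=
      integral_sub (hWd11.add hWd12) (hWd1m.const_mul 2)
    have i2 : (∫ x in S.Ω, (S.Wd 0 (symGrad u₁ x) (v₁ x) + S.Wd 0 (symGrad u₁ x) (v₂ x)))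
        = (∫ x in S.Ω, S.Wd 0 (symGrad u₁ x) (v₁ x))
          + ∫ x in S.Ω, S.Wd 0 (symGrad u₁ x) (v₂ x) := integral_add hWd11 hWd12
    have i3 : (∫ x in S.Ω, 2 * S.Wd 0 (symGrad u₁ x) (m x))
        = 2 * ∫ x in S.Ω, S.Wd 0 (symGrad u₁ x) (m x) := integral_const_mul 2 _
    have i0 : (∫ x in S.Ω, (S.Wd 0 (symGrad u₁ x) (v₁ x) + S.Wd 0 (symGrad u₁ x) (v₂ x)
          - 2 * S.Wd 0 (symGrad u₁ x) (m x)))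
        = ∫ x in S.Ω, S.Wplus 0 (symGrad u₁ x) * (v₁ x - v₂ x)^2/2 :=
      integral_congr_ae (Filter.Eventually.of_forall fun x => by
        simp only [hmdef, s4_Wd_expand]; ring)
    linarith
  -- identity A for u₂
  have idA2 : (∫ x in S.Ω, S.Wd 0 (symGrad u₂ x) (v₁ x))
      + (∫ x in S.Ω, S.Wd 0 (symGrad u₂ x) (v₂ x))
      - 2*(∫ x in S.Ω, S.Wd 0 (symGrad u₂ x) (m x))
      = ∫ x in S.Ω, S.Wplus 0 (symGrad u₂ x) * (v₁ x - v₂ x)^2/2 := by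
    have i1 : (∫ x in S.Ω, (S.Wd 0 (symGrad u₂ x) (v₁ x) + S.Wd 0 (symGrad u₂ x) (v₂ x)
          - 2 * S.Wd 0 (symGrad u₂ x) (m x)))
        = (∫ x in S.Ω, (S.Wd 0 (symGrad u₂ x) (v₁ x) + S.Wd 0 (symGrad u₂ x) (v₂ x)))
          - ∫ x in S.Ω, 2 * S.Wd 0 (symGrad u₂ x) (m x) :=
      integral_sub (hWd21.add hWd22) (hWd2m.const_mul 2)
    have i2 : (∫ x in S.Ω, (S.Wd 0 (symGrad u₂ x) (v₁ x) + S.Wd 0 (symGrad u₂ x) (v₂ x)))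
        = (∫ x in S.Ω, S.Wd 0 (symGrad u₂ x) (v₁ x))
          + ∫ x in S.Ω, S.Wd 0 (symGrad u₂ x) (v₂ x) := integral_add hWd21 hWd22
    have i3 : (∫ x in S.Ω, 2 * S.Wd 0 (symGrad u₂ x) (m x))
        = 2 * ∫ x in S.Ω, S.Wd 0 (symGrad u₂ x) (m x) := integral_const_mul 2 _
    have i0 : (∫ x in S.Ω, (S.Wd 0 (symGrad u₂ x) (v₁ x) + S.Wd 0 (symGrad u₂ x) (v₂ x)
          - 2 * S.Wd 0 (symGrad u₂ x) (m x)))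
        = ∫ x in S.Ω, S.Wplus 0 (symGrad u₂ x) * (v₁ x - v₂ x)^2/2 :=
      integral_congr_ae (Filter.Eventually.of_forall fun x => by
        simp only [hmdef, s4_Wd_expand]; ring)
    linarith
  -- identity B
  have idB : (∫ x in S.Ω, ((v₁ x - 1)^2 + ‖gradient v₁ x‖^2))
      + (∫ x in S.Ω, ((v₂ x - 1)^2 + ‖gradient v₂ x‖^2))
      - 2*(∫ x in S.Ω, ((m x - 1)^2 + ‖gradient m x‖^2))
      = (1/2) * ∫ x in S.Ω, (((v₁ - v₂) x)^2 + ‖gradient (v₁ - v₂) x‖^2) := by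
    have i1 : (∫ x in S.Ω, (((v₁ x - 1)^2 + ‖gradient v₁ x‖^2)
          + ((v₂ x - 1)^2 + ‖gradient v₂ x‖^2) - 2 * ((m x - 1)^2 + ‖gradient m x‖^2)))
        = (∫ x in S.Ω, (((v₁ x - 1)^2 + ‖gradient v₁ x‖^2)
            + ((v₂ x - 1)^2 + ‖gradient v₂ x‖^2)))
          - ∫ x in S.Ω, 2 * ((m x - 1)^2 + ‖gradient m x‖^2) :=
      integral_sub (hlp1.add hlp2) (hlpm.const_mul 2)
    have i2 : (∫ x in S.Ω, (((v₁ x - 1)^2 + ‖gradient v₁ x‖^2)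
          + ((v₂ x - 1)^2 + ‖gradient v₂ x‖^2)))
        = (∫ x in S.Ω, ((v₁ x - 1)^2 + ‖gradient v₁ x‖^2))
          + ∫ x in S.Ω, ((v₂ x - 1)^2 + ‖gradient v₂ x‖^2) := integral_add hlp1 hlp2
    have i3 : (∫ x in S.Ω, 2 * ((m x - 1)^2 + ‖gradient m x‖^2))
        = 2 * ∫ x in S.Ω, ((m x - 1)^2 + ‖gradient m x‖^2) := integral_const_mul 2 _
    have i4 : (∫ x in S.Ω, (1/2) * (((v₁ - v₂) x)^2 + ‖gradient (v₁ - v₂) x‖^2))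
        = (1/2) * ∫ x in S.Ω, (((v₁ - v₂) x)^2 + ‖gradient (v₁ - v₂) x‖^2) :=
      integral_const_mul (1/2) _
    have i0 : (∫ x in S.Ω, (((v₁ x - 1)^2 + ‖gradient v₁ x‖^2)
          + ((v₂ x - 1)^2 + ‖gradient v₂ x‖^2) - 2 * ((m x - 1)^2 + ‖gradient m x‖^2)))
        = ∫ x in S.Ω, (1/2) * (((v₁ - v₂) x)^2 + ‖gradient (v₁ - v₂) x‖^2) := by
      apply integral_congr_ae
      apply (ae_restrict_iff' hΩm).mpr
      apply Filter.Eventually.of_forall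
      intro x hx
      have hgi := s4_grad_identity (hv₁V.1.1 x hx) (hv₂V.1.1 x hx)
      simp only [hmdef]
      simp only [Pi.sub_apply] at hgi ⊢
      linear_combination hgi
    linarith
  -- identity C (cross term)
  have idC : (∫ x in S.Ω, S.Wd 0 (symGrad u₁ x) (v₂ x))
      + (∫ x in S.Ω, S.Wd 0 (symGrad u₂ x) (v₁ x))
      - (∫ x in S.Ω, S.Wd 0 (symGrad u₁ x) (v₁ x))
      - (∫ x in S.Ω, S.Wd 0 (symGrad u₂ x) (v₂ x))
      = ∫ x in S.Ω, (((v₂ x)^2 - (v₁ x)^2)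
          * (S.Wplus 0 (symGrad u₁ x) - S.Wplus 0 (symGrad u₂ x))) := by
    have i1 : (∫ x in S.Ω, (S.Wd 0 (symGrad u₁ x) (v₂ x) + S.Wd 0 (symGrad u₂ x) (v₁ x)
          - (S.Wd 0 (symGrad u₁ x) (v₁ x) + S.Wd 0 (symGrad u₂ x) (v₂ x))))
        = (∫ x in S.Ω, (S.Wd 0 (symGrad u₁ x) (v₂ x) + S.Wd 0 (symGrad u₂ x) (v₁ x)))
          - ∫ x in S.Ω, (S.Wd 0 (symGrad u₁ x) (v₁ x) + S.Wd 0 (symGrad u₂ x) (v₂ x)) :=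
      integral_sub (hWd12.add hWd21) (hWd11.add hWd22)
    have i2 : (∫ x in S.Ω, (S.Wd 0 (symGrad u₁ x) (v₂ x) + S.Wd 0 (symGrad u₂ x) (v₁ x)))
        = (∫ x in S.Ω, S.Wd 0 (symGrad u₁ x) (v₂ x))
          + ∫ x in S.Ω, S.Wd 0 (symGrad u₂ x) (v₁ x) := integral_add hWd12 hWd21
    have i3 : (∫ x in S.Ω, (S.Wd 0 (symGrad u₁ x) (v₁ x) + S.Wd 0 (symGrad u₂ x) (v₂ x)))
        = (∫ x in S.Ω, S.Wd 0 (symGrad u₁ x) (v₁ x))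
          + ∫ x in S.Ω, S.Wd 0 (symGrad u₂ x) (v₂ x) := integral_add hWd11 hWd22
    have i0 : (∫ x in S.Ω, (S.Wd 0 (symGrad u₁ x) (v₂ x) + S.Wd 0 (symGrad u₂ x) (v₁ x)
          - (S.Wd 0 (symGrad u₁ x) (v₁ x) + S.Wd 0 (symGrad u₂ x) (v₂ x))))
        = ∫ x in S.Ω, (((v₂ x)^2 - (v₁ x)^2)
            * (S.Wplus 0 (symGrad u₁ x) - S.Wplus 0 (symGrad u₂ x))) :=
      integral_congr_ae (Filter.Eventually.of_forall fun x => by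
        simp only [s4_Wd_expand]; ring)
    linarith
  -- integrability of R₁, R₂, cross, hden
  have hIR1 : Integrable (fun x => S.Wplus 0 (symGrad u₁ x) * (v₁ x - v₂ x)^2/2)
      (volume.restrict S.Ω) := by
    apply Integrable.congr ((hWd11.add hWd12).sub (hWd1m.const_mul 2))
    apply Filter.Eventually.of_forall
    intro x
    simp only [Pi.add_apply, Pi.sub_apply, s4_Wd_expand, hmdef]
    ring
  have hIR2 : Integrable (fun x => S.Wplus 0 (symGrad u₂ x) * (v₁ x - v₂ x)^2/2)
      (volume.restrict S.Ω) := by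
    apply Integrable.congr ((hWd21.add hWd22).sub (hWd2m.const_mul 2))
    apply Filter.Eventually.of_forall
    intro x
    simp only [Pi.add_apply, Pi.sub_apply, s4_Wd_expand, hmdef]
    ring
  have hIcross : Integrable (fun x => ((v₂ x)^2 - (v₁ x)^2)
      * (S.Wplus 0 (symGrad u₁ x) - S.Wplus 0 (symGrad u₂ x))) (volume.restrict S.Ω) := by
    apply Integrable.congr ((hWd12.add hWd21).sub (hWd11.add hWd22))
    apply Filter.Eventually.of_forall
    intro x
    simp only [Pi.add_apply, Pi.sub_apply, s4_Wd_expand]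
    ring
  have h2le := s4_two_le hp
  have hu12L2 : MemLp (u₁ - u₂) 2 (volume.restrict S.Ω) :=
    (hu₁.2.1.mono_exponent h2le).sub (hu₂.2.1.mono_exponent h2le)
  have hInt1 : Integrable (fun x => ‖(u₁ - u₂) x‖^2) (volume.restrict S.Ω) :=
    hu12L2.norm.integrable_sq
  have hInt2 : Integrable (fun x => ‖fderiv ℝ (u₁ - u₂) x‖^2) (volume.restrict S.Ω) := by
    apply Integrable.mono' (((s4_int_Du_sq S hp hu₁).const_mul 2).add
      ((s4_int_Du_sq S hp hu₂).const_mul 2))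
      (((measurable_fderiv ℝ (u₁ - u₂)).norm.pow_const 2).aestronglyMeasurable)
    rw [ae_restrict_iff' hΩm]
    filter_upwards with x hx
    have hf : fderiv ℝ (u₁ - u₂) x = fderiv ℝ u₁ x - fderiv ℝ u₂ x :=
      fderiv_sub (hu₁.1 x hx) (hu₂.1 x hx)
    rw [Real.norm_eq_abs, abs_of_nonneg (by positivity), hf]
    simp only [Pi.add_apply]
    have h := norm_sub_le (fderiv ℝ u₁ x) (fderiv ℝ u₂ x)
    nlinarith [h, norm_nonneg (fderiv ℝ u₁ x), norm_nonneg (fderiv ℝ u₂ x),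
      norm_nonneg (fderiv ℝ u₁ x - fderiv ℝ u₂ x),
      sq_nonneg (‖fderiv ℝ u₁ x‖ - ‖fderiv ℝ u₂ x‖)]
  have hIden : Integrable (fun x => ‖(u₁ - u₂) x‖^2 + ‖fderiv ℝ (u₁ - u₂) x‖^2)
      (volume.restrict S.Ω) := hInt1.add hInt2
  -- the monotone comparison step
  have hIrhs : Integrable (fun x => S.Wplus 0 (symGrad u₁ x) * (v₁ x - v₂ x)^2/2
      + S.Wplus 0 (symGrad u₂ x) * (v₁ x - v₂ x)^2/2
      + 16*(S.μ+S.κ) * (‖(u₁ - u₂) x‖^2 + ‖fderiv ℝ (u₁ - u₂) x‖^2))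
      (volume.restrict S.Ω) := (hIR1.add hIR2).add (hIden.const_mul _)
  have hmono : (∫ x in S.Ω, (((v₂ x)^2 - (v₁ x)^2)
        * (S.Wplus 0 (symGrad u₁ x) - S.Wplus 0 (symGrad u₂ x))))
      ≤ ∫ x in S.Ω, (S.Wplus 0 (symGrad u₁ x) * (v₁ x - v₂ x)^2/2
          + S.Wplus 0 (symGrad u₂ x) * (v₁ x - v₂ x)^2/2
          + 16*(S.μ+S.κ) * (‖(u₁ - u₂) x‖^2 + ‖fderiv ℝ (u₁ - u₂) x‖^2)) := by
    apply integral_mono_ae hIcross hIrhs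
    filter_upwards [h0v₁, h0v₂, self_mem_ae_restrict hΩm] with x h01 h02 hxΩ
    have h11 : v₁ x ≤ 1 := (hv₁le x hxΩ).trans (hv₀01 x hxΩ).2
    have h21 : v₂ x ≤ 1 := (hv₂le x hxΩ).trans (hv₀01 x hxΩ).2
    have hkey := s4_key S.μ S.κ S.hμ S.hκ (symGrad u₁ x) (symGrad u₂ x) (v₁ x) (v₂ x)
      h01 h11 h02 h21
    have hQeq : frobSq (fun i j => symGrad u₁ x i j - symGrad u₂ x i j)
        = frobSq (symGrad (u₁ - u₂) x) := by
      rw [s4_sg_sub u₁ u₂ x (hu₁.1 x hxΩ) (hu₂.1 x hxΩ)]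
    have hQle : frobSq (symGrad (u₁ - u₂) x)
        ≤ 4*(‖(u₁ - u₂) x‖^2 + ‖fderiv ℝ (u₁ - u₂) x‖^2) := by
      have := s4_frobSq_sg_le (u₁ - u₂) x
      nlinarith [sq_nonneg ‖(u₁ - u₂) x‖]
    rw [hQeq] at hkey
    simp only [s4_Wplus_eq]
    have hc : (0:ℝ) ≤ 4*(S.μ+S.κ) := by nlinarith [S.hμ.le, S.hκ.le]
    nlinarith [hkey, mul_le_mul_of_nonneg_left hQle hc]
  -- split the RHS of hmono
  have hsplit : (∫ x in S.Ω, (S.Wplus 0 (symGrad u₁ x) * (v₁ x - v₂ x)^2/2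
        + S.Wplus 0 (symGrad u₂ x) * (v₁ x - v₂ x)^2/2
        + 16*(S.μ+S.κ) * (‖(u₁ - u₂) x‖^2 + ‖fderiv ℝ (u₁ - u₂) x‖^2)))
      = (∫ x in S.Ω, S.Wplus 0 (symGrad u₁ x) * (v₁ x - v₂ x)^2/2)
        + (∫ x in S.Ω, S.Wplus 0 (symGrad u₂ x) * (v₁ x - v₂ x)^2/2)
        + 16*(S.μ+S.κ) * ∫ x in S.Ω, (‖(u₁ - u₂) x‖^2 + ‖fderiv ℝ (u₁ - u₂) x‖^2) := by
    have j1 : (∫ x in S.Ω, ((S.Wplus 0 (symGrad u₁ x) * (v₁ x - v₂ x)^2/2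
          + S.Wplus 0 (symGrad u₂ x) * (v₁ x - v₂ x)^2/2)
          + 16*(S.μ+S.κ) * (‖(u₁ - u₂) x‖^2 + ‖fderiv ℝ (u₁ - u₂) x‖^2)))
        = (∫ x in S.Ω, (S.Wplus 0 (symGrad u₁ x) * (v₁ x - v₂ x)^2/2
            + S.Wplus 0 (symGrad u₂ x) * (v₁ x - v₂ x)^2/2))
          + ∫ x in S.Ω, 16*(S.μ+S.κ) * (‖(u₁ - u₂) x‖^2 + ‖fderiv ℝ (u₁ - u₂) x‖^2) :=
      integral_add (hIR1.add hIR2) (hIden.const_mul _)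
    have j2 : (∫ x in S.Ω, (S.Wplus 0 (symGrad u₁ x) * (v₁ x - v₂ x)^2/2
          + S.Wplus 0 (symGrad u₂ x) * (v₁ x - v₂ x)^2/2))
        = (∫ x in S.Ω, S.Wplus 0 (symGrad u₁ x) * (v₁ x - v₂ x)^2/2)
          + ∫ x in S.Ω, S.Wplus 0 (symGrad u₂ x) * (v₁ x - v₂ x)^2/2 :=
      integral_add hIR1 hIR2
    have j3 : (∫ x in S.Ω, 16*(S.μ+S.κ) * (‖(u₁ - u₂) x‖^2 + ‖fderiv ℝ (u₁ - u₂) x‖^2))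
        = 16*(S.μ+S.κ) * ∫ x in S.Ω, (‖(u₁ - u₂) x‖^2 + ‖fderiv ℝ (u₁ - u₂) x‖^2) :=
      integral_const_mul _ _
    linarith
  -- final numeric inequality
  have idBG : S.Gc * ((∫ x in S.Ω, ((v₁ x - 1)^2 + ‖gradient v₁ x‖^2))
      + (∫ x in S.Ω, ((v₂ x - 1)^2 + ‖gradient v₂ x‖^2))
      - 2*(∫ x in S.Ω, ((m x - 1)^2 + ‖gradient m x‖^2)))
      = S.Gc * ((1/2) * ∫ x in S.Ω, (((v₁ - v₂) x)^2 + ‖gradient (v₁ - v₂) x‖^2)) := by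
    rw [idB]
  have hfinal : (∫ x in S.Ω, (((v₁ - v₂) x)^2 + ‖gradient (v₁ - v₂) x‖^2))
      ≤ (32*(S.μ+S.κ)/S.Gc)
        * ∫ x in S.Ω, (‖(u₁ - u₂) x‖^2 + ‖fderiv ℝ (u₁ - u₂) x‖^2) := by
    rw [div_mul_eq_mul_div, le_div_iff₀ S.hGc]
    nlinarith [hF1, hF2, idA1, idA2, idBG, idC, hmono, hsplit]
  rw [PFSetting.H1norm, PFSetting.H1normV]
  calc Real.sqrt (∫ x in S.Ω, (((v₁ - v₂) x)^2 + ‖gradient (v₁ - v₂) x‖^2))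
      ≤ Real.sqrt ((32*(S.μ+S.κ)/S.Gc)
          * ∫ x in S.Ω, (‖(u₁ - u₂) x‖^2 + ‖fderiv ℝ (u₁ - u₂) x‖^2)) :=
        Real.sqrt_le_sqrt hfinal
  _ = Real.sqrt (32*(S.μ+S.κ)/S.Gc)
      * Real.sqrt (∫ x in S.Ω, (‖(u₁ - u₂) x‖^2 + ‖fderiv ℝ (u₁ - u₂) x‖^2)) :=
        Real.sqrt_mul hK.le _
end
end

section
/- Let Υ^n := {t^n_k : k = 0,…,n} ⊂ [0,T] be the reparametrized discrete time sets, converging (along a subsequence) in the sense of Kuratowski to the compact set I_s ⊆ [0,T], and let (a,b) be a connected component of I_u := [0,T] \ I_s. Then there exists a sequence of indices k_n with t^n_{k_n} ∈ Υ^n such that t^n_{k_n} → a and t^n_{k_n + 1} → b as n → ∞. -/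
open MeasureTheory Filter Topology
open scoped RealInnerProductSpace

noncomputable section

/-- The whole package of the reparametrized time-discrete evolutions and of their
time-continuous limit: for each `n` the time-discrete separate minimizers `(u^n_k, v^n_k)`
at times `s^n_k = k/n`; the reparametrized times `t^n_k ∈ [0,T]`; the Lipschitz controls
`c^n` with `c^n(t^n_k) = k/n`; the reparametrized piecewise-affine interpolations `v^n(t)`,
uniformly Lipschitz with values in `H¹(Ω)`; the uniform limit `c` of `c^n`; the weak-* limit
`v` of `v^n` (pointwise weak `H¹` limit) with a.e. time derivative `v̇`; the limit
displacement `u(t) = argmin {ℰ(·,v(t)) : 𝒰(c(t))}`; and the Kuratowski limit `I_s` of the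
discrete time sets `Υ^n = {t^n_k}`. -/
structure LimitEvolution (S : PFSetting) (δ : ℝ) (v0 : Pt → ℝ) : Type where
  T : ℝ
  hT : 1 ≤ T
  uk : ℕ → ℕ → Pt → Pt
  vk : ℕ → ℕ → Pt → ℝ
  hvk0 : ∀ n : ℕ, vk n 0 = v0
  huk : ∀ n : ℕ, 0 < n → ∀ k ≤ n, S.IsUMin δ ((k : ℝ) / n) (vk n k) (uk n k)
  hvkmin : ∀ n : ℕ, 0 < n → ∀ k < n, S.IsVMin δ (uk n (k + 1)) (vk n k) (vk n (k + 1))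
  tk : ℕ → ℕ → ℝ
  htk0 : ∀ n : ℕ, tk n 0 = 0
  htkT : ∀ n : ℕ, 0 < n → tk n n = T
  htkmono : ∀ n : ℕ, 0 < n → ∀ k < n, tk n k < tk n (k + 1)
  htkgap : ∃ B > (0 : ℝ), ∀ n : ℕ, 0 < n → ∀ k < n, 1 / (B * n) ≤ tk n (k + 1) - tk n k
  cn : ℕ → ℝ → ℝ
  hcnval : ∀ n : ℕ, 0 < n → ∀ k ≤ n, cn n (tk n k) = (k : ℝ) / n
  hcnmono : ∀ n : ℕ, MonotoneOn (cn n) (Set.Icc 0 T)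
  hcnlip : ∃ K : NNReal, ∀ n : ℕ, LipschitzOnWith K (cn n) (Set.Icc 0 T)
  vfun : ℕ → ℝ → Pt → ℝ
  hvfun : ∀ n : ℕ, 0 < n → ∀ k < n, ∀ t ∈ Set.Icc (tk n k) (tk n (k + 1)),
    vfun n t = fun x =>
      vk n k x + ((t - tk n k) / (tk n (k + 1) - tk n k)) * (vk n (k + 1) x - vk n k x)
  hvlip : ∃ M : ℝ, ∀ n : ℕ, 0 < n → ∀ t₁ ∈ Set.Icc (0 : ℝ) T, ∀ t₂ ∈ Set.Icc (0 : ℝ) T,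
    S.H1norm (vfun n t₁ - vfun n t₂) ≤ M * |t₁ - t₂|
  c : ℝ → ℝ
  hcconv : TendstoUniformlyOn cn c atTop (Set.Icc 0 T)
  v : ℝ → Pt → ℝ
  hvconv : ∀ t ∈ Set.Icc (0 : ℝ) T, S.WeakH1Lim (fun n => vfun n t) (v t)
  u : ℝ → Pt → Pt
  humin : ∀ t ∈ Set.Icc (0 : ℝ) T, S.IsElMin δ (c t) (v t) (u t)
  Is : Set ℝ
  hIsKur : IsKuratowskiLimit (fun n => {x | ∃ k ≤ n, x = tk n k}) Is
  vdot : ℝ → Pt → ℝ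
  hvdot : ∀ᵐ t ∂(volume.restrict (Set.Icc (0 : ℝ) T)),
    Filter.Tendsto (fun h : ℝ => S.H1norm (fun x => (v (t + h) x - v t x) / h - vdot t x))
      (nhdsWithin 0 {(0 : ℝ)}ᶜ) (nhds 0)

/-- The unstable set `I_u = [0,T] \ I_s`. -/
def LimitEvolution.Iu {S : PFSetting} {δ : ℝ} {v0 : Pt → ℝ} (Ev : LimitEvolution S δ v0) :
    Set ℝ := Set.Icc 0 Ev.T \ Ev.Is
lemma kuratowski_key {A : ℕ → Set ℝ} {Is : Set ℝ} (hKur : IsKuratowskiLimit A Is)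
    {a b lo hi : ℝ} (halo : a < lo) (hhib : hi < b)
    (hIu : ∀ c ∈ Set.Ioo a b, c ∉ Is)
    (h0 : ∀ n, (0 : ℝ) ∈ A n)
    {y : ℕ → ℝ}
    (hfreq : ∃ᶠ n in atTop, y n ∈ A n ∧ y n ∈ Set.Icc lo hi) : False := by
  obtain ⟨φ, hφ, hyφ⟩ := Filter.extraction_of_frequently_atTop hfreq
  obtain ⟨c, hc, ψ, hψ, hconv⟩ :=
    (isCompact_Icc (a := lo) (b := hi)).tendsto_subseq (fun j => (hyφ j).2)
  set θ : ℕ → ℕ := φ ∘ ψ with hθdef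
  have hθm : StrictMono θ := hφ.comp hψ
  have hθtop : Tendsto θ atTop atTop := hθm.tendsto_atTop
  set g : ℕ → ℝ := fun n => Metric.infDist c (A n) with hg
  have hgθ : Tendsto (fun j => g (θ j)) atTop (nhds 0) := by
    have h1 : Tendsto (fun j => dist c (y (θ j))) atTop (nhds 0) := by
      have h2 := (tendsto_const_nhds (x := c) (f := (atTop : Filter ℕ))).dist hconv
      simpa [dist_self, hθdef] using h2
    exact squeeze_zero (fun j => Metric.infDist_nonneg)
      (fun j => Metric.infDist_le_dist_of_mem (hyφ (ψ j)).1) h1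
  have hbd : Filter.IsBoundedUnder (· ≥ ·) (atTop : Filter ℕ) g :=
    Filter.isBoundedUnder_of ⟨0, fun n => Metric.infDist_nonneg⟩
  have hbdup : Filter.IsBoundedUnder (· ≤ ·) (atTop : Filter ℕ) g :=
    Filter.isBoundedUnder_of ⟨dist c 0, fun n => Metric.infDist_le_dist_of_mem (h0 n)⟩
  have hle : Filter.liminf g atTop ≤ 0 := by
    by_contra h
    push_neg at h
    have hfr : ∃ᶠ n in atTop, g n ≤ Filter.liminf g atTop / 2 := by
      apply hθtop.frequently
      exact (hgθ.eventually (eventually_le_nhds (by linarith))).frequently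
    have := Filter.liminf_le_of_frequently_le hfr hbd
    linarith
  have hge : (0 : ℝ) ≤ Filter.liminf g atTop :=
    Filter.le_liminf_of_le hbdup.isCoboundedUnder_ge
      (Filter.Eventually.of_forall fun n => Metric.infDist_nonneg)
  have hcIs : c ∈ Is := by
    rw [hKur.2]
    exact le_antisymm hle hge
  exact hIu c ⟨halo.trans_le hc.1, hc.2.trans_lt hhib⟩ hcIs

/-- Lemma 4.9 of the paper.  Let `Υ^n = {t^n_k}` converge in the sense of
Kuratowski to `I_s` and let `(a,b)` be a connected component of `I_u = [0,T] \ I_s`.  Then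
there are indices `k_n` with `t^n_{k_n} → a` and `t^n_{k_n + 1} → b`. -/
theorem stmt8 (S : PFSetting) (v0 : Pt → ℝ) (hv0 : S.MemV v0)
    (hv01 : ∀ x ∈ S.Ω, 0 ≤ v0 x ∧ v0 x ≤ 1)
    (Ev : LimitEvolution S 0 v0)
    (a b : ℝ) (hab : a < b) (ha : a ∈ Ev.Is) (hb : b ∈ Ev.Is)
    (hcomp : Set.Ioo a b ⊆ Ev.Iu) :
    ∃ kn : ℕ → ℕ, (∀ n : ℕ, 0 < n → kn n < n) ∧
      Tendsto (fun n => Ev.tk n (kn n)) atTop (nhds a) ∧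
      Tendsto (fun n => Ev.tk n (kn n + 1)) atTop (nhds b) := by
  classical
  obtain ⟨hKur1, hKur2⟩ := Ev.hIsKur
  set A : ℕ → Set ℝ := fun n => {x | ∃ k ≤ n, x = Ev.tk n k} with hA
  have h0A : ∀ n, (0 : ℝ) ∈ A n := fun n => ⟨0, Nat.zero_le n, (Ev.htk0 n).symm⟩
  have hAne : ∀ n, (A n).Nonempty := fun n => ⟨0, h0A n⟩
  -- monotonicity of `tk n ·` on `[0, n]`
  have hmono : ∀ n, 0 < n → ∀ j k, j ≤ k → k ≤ n → Ev.tk n j ≤ Ev.tk n k := by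
    intro n hn j k hjk hkn
    induction k with
    | zero =>
      have : j = 0 := Nat.le_zero.mp hjk
      simp [this]
    | succ k ih =>
      rcases Nat.lt_or_ge j (k + 1) with h | h
      · have hjk' : j ≤ k := Nat.lt_succ_iff.mp h
        have hk : k ≤ n := le_trans (Nat.le_succ k) hkn
        exact le_trans (ih hjk' hk)
          (le_of_lt (Ev.htkmono n hn k (Nat.lt_of_succ_le hkn)))
      · have : j = k + 1 := le_antisymm hjk h
        simp [this]
  have hbounds : ∀ n k, k ≤ n → 0 ≤ Ev.tk n k ∧ Ev.tk n k ≤ Ev.T := by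
    intro n k hk
    rcases Nat.eq_zero_or_pos n with h | h
    · subst h
      have hk0 : k = 0 := Nat.le_zero.mp hk
      subst hk0
      rw [Ev.htk0]
      exact ⟨le_refl 0, by linarith [Ev.hT]⟩
    · constructor
      · have := hmono n h 0 k (Nat.zero_le k) hk
        rwa [Ev.htk0] at this
      · have := hmono n h k n hk (le_refl n)
        rwa [Ev.htkT n h] at this
  -- `Is ⊆ [0, T]` at the points `a` and `b`
  have hda : Tendsto (fun n => Metric.infDist a (A n)) atTop (nhds 0) := by
    have h := ha
    rw [hKur1] at h
    exact h
  have hdb : Tendsto (fun n => Metric.infDist b (A n)) atTop (nhds 0) := by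
    have h := hb
    rw [hKur1] at h
    exact h
  have h0a : 0 ≤ a := by
    by_contra h
    push_neg at h
    have hlb : ∀ n, -a ≤ Metric.infDist a (A n) := by
      intro n
      refine le_of_not_gt fun hlt => ?_
      obtain ⟨y, hyA, hyd⟩ := (Metric.infDist_lt_iff (hAne n)).mp hlt
      obtain ⟨k, hk, rfl⟩ := hyA
      have h1 := (hbounds n k hk).1
      rw [Real.dist_eq] at hyd
      have := abs_lt.mp hyd
      linarith
    have := ge_of_tendsto hda (Filter.Eventually.of_forall hlb)
    linarith
  have hbT : b ≤ Ev.T := by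
    by_contra h
    push_neg at h
    have hlb : ∀ n, b - Ev.T ≤ Metric.infDist b (A n) := by
      intro n
      refine le_of_not_gt fun hlt => ?_
      obtain ⟨y, hyA, hyd⟩ := (Metric.infDist_lt_iff (hAne n)).mp hlt
      obtain ⟨k, hk, rfl⟩ := hyA
      have h1 := (hbounds n k hk).2
      rw [Real.dist_eq] at hyd
      have := abs_lt.mp hyd
      linarith
    have := ge_of_tendsto hdb (Filter.Eventually.of_forall hlb)
    linarith
  set m : ℝ := (a + b) / 2 with hm
  have ham : a < m := by rw [hm]; linarith
  have hmb : m < b := by rw [hm]; linarith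
  have hm0 : 0 < m := lt_of_le_of_lt h0a ham
  set kn : ℕ → ℕ := fun n => Nat.findGreatest (fun k => Ev.tk n k < m) (n - 1) with hkn
  have hknle : ∀ n, kn n ≤ n - 1 := fun n => Nat.findGreatest_le (n - 1)
  have hknlt : ∀ n, 0 < n → kn n < n := by
    intro n hn
    have := hknle n
    omega
  have hknlen : ∀ n, kn n ≤ n := fun n => le_trans (hknle n) (Nat.sub_le n 1)
  have hP0 : ∀ n, Ev.tk n 0 < m := by
    intro n
    rw [Ev.htk0]
    exact hm0
  have hfg : ∀ n, Ev.tk n (kn n) < m ∧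
      (∀ k, kn n < k → k ≤ n - 1 → ¬ Ev.tk n k < m) ∧
      (∀ k, k ≤ n - 1 → Ev.tk n k < m → k ≤ kn n) := by
    intro n
    simp only [hkn]
    exact ⟨Nat.findGreatest_spec (P := fun k => Ev.tk n k < m) (Nat.zero_le (n - 1)) (hP0 n),
      fun k h1 h2 => Nat.findGreatest_is_greatest (P := fun k => Ev.tk n k < m) h1 h2,
      fun k h1 h2 => Nat.le_findGreatest (P := fun k => Ev.tk n k < m) h1 h2⟩
  have hP : ∀ n, Ev.tk n (kn n) < m := fun n => (hfg n).1
  have claim3 : ∀ n, 0 < n → m ≤ Ev.tk n (kn n + 1) := by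
    intro n hn
    by_cases h : kn n + 1 ≤ n - 1
    · exact le_of_not_gt ((hfg n).2.1 (kn n + 1) (Nat.lt_succ_self _) h)
    · have hkne : kn n + 1 = n := by have := hknle n; omega
      rw [hkne, Ev.htkT n hn]
      linarith
  have claim1 : ∀ n, 0 < n → ∀ k ≤ n, Ev.tk n k < m → Ev.tk n k ≤ Ev.tk n (kn n) := by
    intro n hn k hk hkm
    have hk' : k ≤ n - 1 := by
      by_contra h
      have hkn' : k = n := by omega
      rw [hkn', Ev.htkT n hn] at hkm
      linarith
    exact hmono n hn k (kn n) ((hfg n).2.2 k hk' hkm) (hknlen n)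
  have claim2 : ∀ n, 0 < n → ∀ k ≤ n, m ≤ Ev.tk n k → Ev.tk n (kn n + 1) ≤ Ev.tk n k := by
    intro n hn k hk hmk
    have hlt : kn n < k := by
      by_contra h
      push_neg at h
      have := le_trans hmk (hmono n hn k (kn n) h (hknlen n))
      exact absurd this (not_le.mpr (hP n))
    exact hmono n hn (kn n + 1) k hlt hk
  have hIu : ∀ c ∈ Set.Ioo a b, c ∉ Ev.Is := fun c hc hcIs => (hcomp hc).2 hcIs
  -- convergence to `a`
  have hlowa : ∀ ε > (0 : ℝ), ∀ᶠ n in atTop, a - ε < Ev.tk n (kn n) := by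
    intro ε hε
    have hball : ∀ᶠ n in atTop, Metric.infDist a (A n) < min ε (m - a) :=
      hda.eventually_lt_const (lt_min hε (by linarith))
    filter_upwards [hball, eventually_ge_atTop 1] with n hn h1
    have hn0 : 0 < n := h1
    obtain ⟨y, hyA, hyd⟩ := (Metric.infDist_lt_iff (hAne n)).mp hn
    obtain ⟨k, hk, rfl⟩ := hyA
    rw [Real.dist_eq] at hyd
    have habs := abs_lt.mp hyd
    have hεle := min_le_left ε (m - a)
    have hmle := min_le_right ε (m - a)
    have htkm : Ev.tk n k < m := by linarith
    have := claim1 n hn0 k hk htkm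
    linarith
  have hupa : ∀ ε > (0 : ℝ), ∀ᶠ n in atTop, Ev.tk n (kn n) < a + ε := by
    intro ε hε
    rcases le_or_gt (m - a) ε with h | h
    · filter_upwards [eventually_ge_atTop 1] with n h1
      exact lt_of_lt_of_le (hP n) (by linarith)
    · by_contra hcon
      rw [Filter.not_eventually] at hcon
      have hfreq : ∃ᶠ n in atTop,
          Ev.tk n (kn n) ∈ A n ∧ Ev.tk n (kn n) ∈ Set.Icc (a + ε) m := by
        apply (hcon.and_eventually (eventually_ge_atTop 1)).mono
        rintro n ⟨hn1, hn2⟩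
        exact ⟨⟨kn n, hknlen n, rfl⟩, ⟨not_lt.mp hn1, le_of_lt (hP n)⟩⟩
      exact kuratowski_key ⟨hKur1, hKur2⟩ (by linarith) hmb hIu h0A hfreq
  -- convergence to `b`
  have hupb : ∀ ε > (0 : ℝ), ∀ᶠ n in atTop, Ev.tk n (kn n + 1) < b + ε := by
    intro ε hε
    have hball : ∀ᶠ n in atTop, Metric.infDist b (A n) < min ε (b - m) :=
      hdb.eventually_lt_const (lt_min hε (by linarith))
    filter_upwards [hball, eventually_ge_atTop 1] with n hn h1
    have hn0 : 0 < n := h1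
    obtain ⟨y, hyA, hyd⟩ := (Metric.infDist_lt_iff (hAne n)).mp hn
    obtain ⟨k, hk, rfl⟩ := hyA
    rw [Real.dist_eq] at hyd
    have habs := abs_lt.mp hyd
    have hεle := min_le_left ε (b - m)
    have hmle := min_le_right ε (b - m)
    have htkm : m ≤ Ev.tk n k := by linarith
    have := claim2 n hn0 k hk htkm
    linarith
  have hlowb : ∀ ε > (0 : ℝ), ∀ᶠ n in atTop, b - ε < Ev.tk n (kn n + 1) := by
    intro ε hε
    rcases lt_or_ge (b - m) ε with h | h
    · filter_upwards [eventually_ge_atTop 1] with n h1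
      exact lt_of_lt_of_le (by linarith) (claim3 n h1)
    · by_contra hcon
      rw [Filter.not_eventually] at hcon
      have hfreq : ∃ᶠ n in atTop,
          Ev.tk n (kn n + 1) ∈ A n ∧ Ev.tk n (kn n + 1) ∈ Set.Icc m (b - ε) := by
        apply (hcon.and_eventually (eventually_ge_atTop 1)).mono
        rintro n ⟨hn1, hn2⟩
        have hn0 : 0 < n := hn2
        have hkn1 : kn n + 1 ≤ n := hknlt n hn0
        exact ⟨⟨kn n + 1, hkn1, rfl⟩, ⟨claim3 n hn0, not_lt.mp hn1⟩⟩
      exact kuratowski_key ⟨hKur1, hKur2⟩ ham (by linarith) hIu h0A hfreq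
  refine ⟨kn, hknlt, ?_, ?_⟩
  · rw [Metric.tendsto_atTop]
    intro ε hε
    have hev : ∀ᶠ n in atTop, dist (Ev.tk n (kn n)) a < ε := by
      filter_upwards [hlowa ε hε, hupa ε hε] with n h1 h2
      rw [Real.dist_eq, abs_lt]
      constructor <;> linarith
    obtain ⟨N, hN⟩ := Filter.eventually_atTop.mp hev
    exact ⟨N, hN⟩
  · rw [Metric.tendsto_atTop]
    intro ε hε
    have hev : ∀ᶠ n in atTop, dist (Ev.tk n (kn n + 1)) b < ε := by
      filter_upwards [hlowb ε hε, hupb ε hε] with n h1 h2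
      rw [Real.dist_eq, abs_lt]
      constructor <;> linarith
    obtain ⟨N, hN⟩ := Filter.eventually_atTop.mp hev
    exact ⟨N, hN⟩
end
end

section
/- The limit parametrization c : [0,T] → [0,1] (the uniform limit of the parametrizations c^n) is constant on each connected component of the unstable set I_u. -/
open MeasureTheory Filter Topology
open scoped RealInnerProductSpace

noncomputable section

/-- abstract core lemma -/
private lemma stmt9_core (T : ℝ) (hT : (1:ℝ) ≤ T) (tk : ℕ → ℕ → ℝ)
    (htk0 : ∀ n : ℕ, tk n 0 = 0) (htkT : ∀ n : ℕ, 0 < n → tk n n = T)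
    (htkmono : ∀ n : ℕ, 0 < n → ∀ k < n, tk n k < tk n (k + 1))
    (cn : ℕ → ℝ → ℝ)
    (hcnval : ∀ n : ℕ, 0 < n → ∀ k ≤ n, cn n (tk n k) = (k : ℝ) / n)
    (hcnmono : ∀ n : ℕ, MonotoneOn (cn n) (Set.Icc 0 T))
    (c : ℝ → ℝ) (hcconv : TendstoUniformlyOn cn c atTop (Set.Icc 0 T))
    (Is : Set ℝ)
    (hIsKur : IsKuratowskiLimit (fun n => {x | ∃ k ≤ n, x = tk n k}) Is)
    (a b : ℝ) (hsub : Set.Ioo a b ⊆ Set.Icc 0 T \ Is)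
    (s₁ s₂ : ℝ) (h₁ : s₁ ∈ Set.Ioo a b) (h₂ : s₂ ∈ Set.Ioo a b) (h12 : s₁ < s₂) :
    c s₁ = c s₂ := by
  have hs₁T : s₁ ∈ Set.Icc 0 T := (hsub h₁).1
  have hs₂T : s₂ ∈ Set.Icc 0 T := (hsub h₂).1
  -- grid points are in [0, T]
  have htkm : ∀ n : ℕ, 0 < n → ∀ j k, j ≤ k → k ≤ n → tk n j ≤ tk n k := by
    intro n hn j k hjk hkn
    induction k with
    | zero => simp [Nat.le_zero.mp hjk]
    | succ m ih =>
      rcases Nat.eq_or_lt_of_le hjk with h | h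
      · exact le_of_eq (by rw [h])
      · exact le_trans (ih (Nat.lt_succ_iff.mp h) (le_trans (Nat.le_succ m) hkn))
          (le_of_lt (htkmono n hn m (Nat.lt_of_succ_le hkn)))
  have htkIcc : ∀ n : ℕ, 0 < n → ∀ k ≤ n, tk n k ∈ Set.Icc 0 T := by
    intro n hn k hkn
    constructor
    · rw [← htk0 n]; exact htkm n hn 0 k (Nat.zero_le k) hkn
    · rw [← htkT n hn]; exact htkm n hn k n hkn le_rfl
  have h0T : (0:ℝ) ∈ Set.Icc 0 T := ⟨le_rfl, le_trans zero_le_one hT⟩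
  have hTT : T ∈ Set.Icc (0:ℝ) T := ⟨le_trans zero_le_one hT, le_rfl⟩
  -- cn values in [0,1]
  have hcn01 : ∀ n : ℕ, 0 < n → ∀ s ∈ Set.Icc 0 T, 0 ≤ cn n s ∧ cn n s ≤ 1 := by
    intro n hn s hs
    have h0 : cn n 0 = 0 := by
      have := hcnval n hn 0 (Nat.zero_le n); rwa [htk0 n, Nat.cast_zero, zero_div] at this
    have h1 : cn n T = 1 := by
      have := hcnval n hn n le_rfl
      rwa [htkT n hn, div_self (by positivity : (n:ℝ) ≠ 0)] at this
    constructor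
    · rw [← h0]; exact hcnmono n h0T hs hs.1
    · rw [← h1]; exact hcnmono n hs hTT hs.2
  -- pointwise convergence
  have hpt : ∀ s ∈ Set.Icc (0:ℝ) T, Tendsto (fun n => cn n s) atTop (nhds (c s)) := fun s hs =>
    hcconv.tendsto_at hs
  -- c is monotone on [0,T] (for our two points)
  have hcle : c s₁ ≤ c s₂ := by
    refine le_of_tendsto_of_tendsto (hpt s₁ hs₁T) (hpt s₂ hs₂T) ?_
    filter_upwards [] with n
    exact hcnmono n hs₁T hs₂T h12.le
  by_contra hne
  have hd : 0 < c s₂ - c s₁ := by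
    rcases lt_or_eq_of_le hcle with h | h
    · linarith
    · exact absurd h hne
  set d := c s₂ - c s₁ with hdd
  -- eventually there is a grid point in (s₁, s₂)
  have hev : ∀ᶠ n in atTop, ∃ k ≤ n, tk n k ∈ Set.Ioo s₁ s₂ := by
    have hε : (0:ℝ) < d / 4 := by linarith
    have h1 := (Metric.tendstoUniformlyOn_iff.mp hcconv) (d/4) hε
    have h2 : ∀ᶠ n : ℕ in atTop, (2:ℝ)/n < d/2 :=
      (tendsto_const_div_atTop_nhds_zero_nat 2).eventually_lt_const (by linarith)
    filter_upwards [h1, h2, eventually_gt_atTop 0] with n hn1 hn2 hn0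
    set r₁ := cn n s₁ with hr₁
    set r₂ := cn n s₂ with hr₂
    have hb₁ := hn1 s₁ hs₁T
    have hb₂ := hn1 s₂ hs₂T
    rw [Real.dist_eq, abs_lt] at hb₁ hb₂
    have hr21 : r₂ - r₁ > d/2 := by
      have := hb₁.1; have := hb₁.2; have := hb₂.1; have := hb₂.2
      simp only [hr₁, hr₂]; linarith
    have hr₁0 : 0 ≤ r₁ := (hcn01 n hn0 s₁ hs₁T).1
    have hr₂1 : r₂ ≤ 1 := (hcn01 n hn0 s₂ hs₂T).2
    have hnpos : (0:ℝ) < n := Nat.cast_pos.mpr hn0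
    set k : ℕ := ⌊(n:ℝ) * r₁⌋₊ + 1 with hk
    have hk1 : r₁ < (k:ℝ)/n := by
      rw [lt_div_iff₀ hnpos, mul_comm]
      have := Nat.lt_floor_add_one ((n:ℝ) * r₁)
      push_cast [hk]; push_cast at this; linarith
    have hk2 : (k:ℝ)/n < r₂ := by
      rw [div_lt_iff₀ hnpos]
      have hfl : (⌊(n:ℝ) * r₁⌋₊ : ℝ) ≤ (n:ℝ) * r₁ := Nat.floor_le (by positivity)
      have h1n : (1:ℝ) < d/4 * n := by
        rw [← div_lt_iff₀ hnpos]
        have h2n : (2:ℝ)/n = 2 * (1/n) := by ring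
        rw [h2n] at hn2
        have : (0:ℝ) ≤ 1/n := by positivity
        linarith
      have hmul : (n:ℝ) * (d/2) < n * (r₂ - r₁) := by
        exact mul_lt_mul_of_pos_left hr21 hnpos
      push_cast [hk]
      nlinarith
    have hkn : k ≤ n := by
      by_contra hc
      push_neg at hc
      have : (n:ℝ) < k := Nat.cast_lt.mpr hc
      have : (1:ℝ) ≤ (k:ℝ)/n := by rw [le_div_iff₀ hnpos]; linarith
      linarith
    refine ⟨k, hkn, ?_, ?_⟩
    · by_contra hc
      push_neg at hc
      have := hcnmono n (htkIcc n hn0 k hkn) hs₁T hc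
      rw [hcnval n hn0 k hkn] at this
      exact absurd (lt_of_lt_of_le hk1 this) (lt_irrefl _)
    · by_contra hc
      push_neg at hc
      have := hcnmono n hs₂T (htkIcc n hn0 k hkn) hc
      rw [hcnval n hn0 k hkn] at this
      exact absurd (lt_of_le_of_lt this hk2) (lt_irrefl _)
  -- choose grid points
  obtain ⟨N, hN⟩ := eventually_atTop.mp hev
  classical
  set x : ℕ → ℝ := fun n => if h : ∃ k ≤ n, tk n k ∈ Set.Ioo s₁ s₂ then tk n h.choose else s₁
    with hx
  have hxIcc : ∀ n, x n ∈ Set.Icc s₁ s₂ := by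
    intro n
    by_cases h : ∃ k ≤ n, tk n k ∈ Set.Ioo s₁ s₂
    · have hxn : x n = tk n h.choose := by simp only [hx]; exact dif_pos h
      rw [hxn]; exact ⟨h.choose_spec.2.1.le, h.choose_spec.2.2.le⟩
    · have hxn : x n = s₁ := by simp only [hx]; exact dif_neg h
      rw [hxn]; exact ⟨le_rfl, h12.le⟩
  have hxmem : ∀ n ≥ N, x n ∈ {y | ∃ k ≤ n, y = tk n k} := by
    intro n hn
    have h := hN n hn
    have hxn : x n = tk n h.choose := by simp only [hx]; exact dif_pos h
    exact ⟨h.choose, h.choose_spec.1, hxn⟩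
  -- extract a convergent subsequence
  obtain ⟨τ, hτmem, φ, hφ, hφconv⟩ := (isCompact_Icc).tendsto_subseq hxIcc
  -- τ ∈ Is via the liminf characterization
  set f : ℕ → ℝ := fun n => Metric.infDist τ {y | ∃ k ≤ n, y = tk n k} with hf
  have hf0 : ∀ n, 0 ≤ f n := fun n => Metric.infDist_nonneg
  have hfle : ∀ n ≥ N, f n ≤ dist τ (x n) := by
    intro n hn
    calc f n ≤ Metric.infDist (x n) {y | ∃ k ≤ n, y = tk n k} + dist τ (x n) :=
          Metric.infDist_le_infDist_add_dist
      _ = dist τ (x n) := by rw [Metric.infDist_zero_of_mem (hxmem n hn), zero_add]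
  have hsub' : Tendsto (fun j => dist τ (x (φ j))) atTop (nhds 0) :=
    tendsto_iff_dist_tendsto_zero.mp hφconv |>.congr (fun j => dist_comm _ _)
  have hbdd_ge : IsBoundedUnder (· ≥ ·) atTop f :=
    isBoundedUnder_of ⟨0, fun n => hf0 n⟩
  have hbdd_le : IsBoundedUnder (· ≤ ·) atTop f :=
    isBoundedUnder_of ⟨dist τ 0, fun n =>
      Metric.infDist_le_dist_of_mem ⟨0, Nat.zero_le n, (htk0 n).symm⟩⟩
  have hliminf : liminf f atTop = 0 := by
    refine le_antisymm ?_ ?_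
    · refine le_of_forall_pos_le_add ?_
      intro ε hε
      rw [zero_add]
      refine liminf_le_of_frequently_le ?_ hbdd_ge
      have hev2 : ∀ᶠ j in atTop, dist τ (x (φ j)) < ε := hsub'.eventually_lt_const hε
      rw [frequently_atTop]
      intro m
      obtain ⟨j, hj1, hj2⟩ := (hev2.and (eventually_ge_atTop (max m N))).exists
      have hjm : max m N ≤ φ j := le_trans hj2 hφ.le_apply
      refine ⟨φ j, le_trans (le_max_left m N) hjm, ?_⟩
      exact le_of_lt (lt_of_le_of_lt (hfle (φ j) (le_trans (le_max_right m N) hjm)) hj1)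
    · exact le_liminf_of_le hbdd_le.isCoboundedUnder_ge (Eventually.of_forall hf0)
  have hτIs : τ ∈ Is := by
    rw [hIsKur.2]
    exact hliminf
  have hτab : τ ∈ Set.Ioo a b := ⟨lt_of_lt_of_le h₁.1 hτmem.1, lt_of_le_of_lt hτmem.2 h₂.2⟩
  exact (hsub hτab).2 hτIs

/-- Lemma 4.10 of the paper.  The limit parametrization `c` (uniform limit
of the `c^n`) is constant on each connected component `(a,b)` of the unstable set
`I_u = [0,T] \ I_s`. -/
theorem stmt9 (S : PFSetting) (v0 : Pt → ℝ) (hv0 : S.MemV v0)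
    (hv01 : ∀ x ∈ S.Ω, 0 ≤ v0 x ∧ v0 x ≤ 1)
    (Ev : LimitEvolution S 0 v0) :
    ∀ a b : ℝ, a < b → a ∈ Ev.Is → b ∈ Ev.Is → Set.Ioo a b ⊆ Ev.Iu →
      ∀ t₁ ∈ Set.Ioo a b, ∀ t₂ ∈ Set.Ioo a b, Ev.c t₁ = Ev.c t₂ := by
  intro a b hab ha hb hsub t₁ ht₁ t₂ ht₂
  have hsub' : Set.Ioo a b ⊆ Set.Icc 0 Ev.T \ Ev.Is := hsub
  rcases lt_trichotomy t₁ t₂ with h | h | h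
  · exact stmt9_core Ev.T Ev.hT Ev.tk Ev.htk0 Ev.htkT Ev.htkmono Ev.cn Ev.hcnval Ev.hcnmono
      Ev.c Ev.hcconv Ev.Is Ev.hIsKur a b hsub' t₁ t₂ ht₁ ht₂ h
  · rw [h]
  · exact (stmt9_core Ev.T Ev.hT Ev.tk Ev.htk0 Ev.htkT Ev.htkmono Ev.cn Ev.hcnval Ev.hcnmono
      Ev.c Ev.hcconv Ev.Is Ev.hIsKur a b hsub' t₂ t₁ ht₂ ht₁ h).symm
end
end
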